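/- arXiv:2402.18675 — 10 statements merged into one kernel-verified Lean document; each statement's English description precedes it below -/
import Mathlib

section
/- The heterogeneous dependency matrix D(par, σ) of any heterogeneous out-tree (par, σ) has no two equal rows and no two equal columns. -/
/-- Iterate the parent function `k` times starting from node `i`. -/
def parIter {N : ℕ} (par : Fin N → Option (Fin N)) : ℕ → Fin N → Option (Fin N)
  | 0, i => some i
  | k + 1, i => (par i).bind (parIter par k)

/-- `a` is an ancestor of `i`: `a` is reached from `i` by iterating `par` at least once. -/
def IsAncestor {N : ℕ} (par : Fin N → Option (Fin N)) (a i : Fin N) : Prop :=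
  ∃ k : ℕ, 0 < k ∧ parIter par k i = some a

/-- `par` is a well-founded parent function. -/
def WFParent {N : ℕ} (par : Fin N → Option (Fin N)) : Prop :=
  WellFounded (fun a i : Fin N => par i = some a)

open Classical in
/-- The heterogeneous dependency matrix of the heterogeneous out-tree `(par, σ)`:
`D i j = 1` iff `σ⁻¹ j` equals `i` or is an ancestor of `i`. -/
noncomputable def depMatrix {N : ℕ} (par : Fin N → Option (Fin N)) (σ : Equiv.Perm (Fin N)) :
    Fin N → Fin N → Bool :=
  fun i j => decide (σ.symm j = i ∨ IsAncestor par (σ.symm j) i)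

/-- The depth of node `i`: the least `k ≥ 1` with `parIter par k i = none`. -/
noncomputable def treeDepth {N : ℕ} (par : Fin N → Option (Fin N)) (i : Fin N) : ℕ :=
  sInf {k : ℕ | 1 ≤ k ∧ parIter par k i = none}

/-- Node `i` is a leaf: no node has `i` as its parent. -/
def IsLeaf {N : ℕ} (par : Fin N → Option (Fin N)) (i : Fin N) : Prop :=
  ∀ x, par x ≠ some i

/-- Tree dilation `di^{i→j}`: replace `par i` by `some j`. -/
def treeDilate {N : ℕ} (par : Fin N → Option (Fin N)) (i j : Fin N) :
    Fin N → Option (Fin N) :=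
  Function.update par i (some j)

/-- Tree absorption `ab^{j→i}`: replace `par i` by `none`. -/
def treeAbsorb {N : ℕ} (par : Fin N → Option (Fin N)) (i : Fin N) :
    Fin N → Option (Fin N) :=
  Function.update par i none

/-- Applicability of tree dilation `di^{i→j}`. -/
def DilateOK {N : ℕ} (par : Fin N → Option (Fin N)) (i j : Fin N) : Prop :=
  par i = none ∧ j ≠ i ∧ ¬ IsAncestor par i j

/-- Applicability of tree absorption `ab^{j→i}`. -/
def AbsorbOK {N : ℕ} (par : Fin N → Option (Fin N)) (i j : Fin N) : Prop :=
  IsLeaf par i ∧ par i = some j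

/-- Number of ones in a binary row. -/
def onesCount {N : ℕ} (r : Fin N → Bool) : ℕ :=
  (Finset.univ.filter fun c => r c = true).card

/-- Entrywise XOR of two rows. -/
def rowXor {N : ℕ} (r s : Fin N → Bool) : Fin N → Bool :=
  fun c => xor (r c) (s c)

/-- Replace row `i` of `S` by the XOR of rows `i` and `j`. -/
def matUpdateXor {K N : ℕ} (S : Fin K → Fin N → Bool) (i j : Fin K) :
    Fin K → Fin N → Bool :=
  Function.update S i (rowXor (S i) (S j))

/-- Applicability of matrix absorption `ab^{j→i}`. -/
def MatAbsorbOK {K N : ℕ} (S : Fin K → Fin N → Bool) (i j : Fin K) : Prop :=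
  onesCount (rowXor (S i) (S j)) = 1 ∧ onesCount (S j) < onesCount (S i)

/-- Applicability of matrix dilation `di^{i→j}`. -/
def MatDilateOK {K N : ℕ} (S : Fin K → Fin N → Bool) (i j : Fin K) : Prop :=
  onesCount (S i) = 1 ∧ ∀ c, ¬ (S i c = true ∧ S j c = true)

/-- A permutation matrix: exactly one `1` in each row and each column. -/
def IsPermMatrix {N : ℕ} (S : Fin N → Fin N → Bool) : Prop :=
  (∀ i, ∃! j, S i j = true) ∧ (∀ j, ∃! i, S i j = true)

/-- Column set `S_c` of column `c`. -/
def colSet {K N : ℕ} (D : Fin K → Fin N → Bool) (c : Fin N) : Set (Fin K) :=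
  {r | D r c = true}

/-- Unique element set `J_{S_c}`: `S_c` minus the union of all column sets that are
proper subsets of `S_c`. -/
def JSet {K N : ℕ} (D : Fin K → Fin N → Bool) (c : Fin N) : Set (Fin K) :=
  {r | r ∈ colSet D c ∧ ∀ c' : Fin N, colSet D c' ⊂ colSet D c → r ∉ colSet D c'}

/-- `1°`: no row is all-zero. -/
def Cond1 {K N : ℕ} (D : Fin K → Fin N → Bool) : Prop :=
  ∀ r, ∃ c, D r c = true

/-- `2°`: no column is all-zero. -/
def Cond2 {K N : ℕ} (D : Fin K → Fin N → Bool) : Prop :=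
  ∀ c, ∃ r, D r c = true

/-- `3°`: no two distinct rows are equal. -/
def Cond3 {K N : ℕ} (D : Fin K → Fin N → Bool) : Prop :=
  ∀ r₁ r₂, (∀ c, D r₁ c = D r₂ c) → r₁ = r₂

/-- `4°`: no two distinct columns are equal. -/
def Cond4 {K N : ℕ} (D : Fin K → Fin N → Bool) : Prop :=
  ∀ c₁ c₂, (∀ r, D r c₁ = D r c₂) → c₁ = c₂

/-- `5°`: any two column sets are nested or disjoint. -/
def Cond5 {K N : ℕ} (D : Fin K → Fin N → Bool) : Prop :=
  ∀ c₁ c₂, colSet D c₁ ⊆ colSet D c₂ ∨ colSet D c₂ ⊆ colSet D c₁ ∨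
    colSet D c₁ ∩ colSet D c₂ = ∅

/-- `6°`: every unique element set has exactly one element. -/
def Cond6 {K N : ℕ} (D : Fin K → Fin N → Bool) : Prop :=
  ∀ c, ∃! r, r ∈ JSet D c

/-- Condition set `P = {1°, 2°, 3°, 4°, 5°}`. -/
def CondP {K N : ℕ} (D : Fin K → Fin N → Bool) : Prop :=
  Cond1 D ∧ Cond2 D ∧ Cond3 D ∧ Cond4 D ∧ Cond5 D

/-- Condition set `P⁻ = {1°, 3°, 5°}`. -/
def CondPminus {K N : ℕ} (D : Fin K → Fin N → Bool) : Prop :=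
  Cond1 D ∧ Cond3 D ∧ Cond5 D

/-- One step of matrix absorption or matrix dilation. -/
def MatStep {N : ℕ} (S T : Fin N → Fin N → Bool) : Prop :=
  ∃ i j, (MatAbsorbOK S i j ∨ MatDilateOK S i j) ∧ T = matUpdateXor S i j


lemma isAncestor_transGen {N : ℕ} {par : Fin N → Option (Fin N)} {a i : Fin N}
    (h : IsAncestor par a i) :
    Relation.TransGen (fun a i : Fin N => par i = some a) a i := by
  obtain ⟨k, hk, hiter⟩ := h
  induction k generalizing i with
  | zero => omega
  | succ k ih =>
    simp only [parIter, Option.bind_eq_some_iff] at hiter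
    obtain ⟨b, hb, hrest⟩ := hiter
    rcases Nat.eq_zero_or_pos k with rfl | hk'
    · simp only [parIter, Option.some_inj] at hrest
      subst hrest
      exact Relation.TransGen.single hb
    · exact (ih hk' hrest).tail hb

lemma not_isAncestor_self {N : ℕ} {par : Fin N → Option (Fin N)} (hwf : WFParent par)
    (i : Fin N) : ¬ IsAncestor par i i := fun h => by
  have h' := isAncestor_transGen h
  exact (hwf.transGen).asymmetric i i h' h'

lemma isAncestor_trans {N : ℕ} {par : Fin N → Option (Fin N)} {a b i : Fin N}
    (h1 : IsAncestor par a b) (h2 : IsAncestor par b i) : IsAncestor par a i := by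
  obtain ⟨k, hk, hk2⟩ := h1
  obtain ⟨l, hl, hl2⟩ := h2
  refine ⟨l + k, by omega, ?_⟩
  have hadd : ∀ (l k : ℕ) (i : Fin N),
      parIter par (l + k) i = (parIter par l i).bind (parIter par k) := by
    intro l
    induction l with
    | zero => intro k i; simp [parIter]
    | succ l ih =>
      intro k i
      rw [Nat.succ_add]
      simp only [parIter]
      cases par i with
      | none => simp
      | some b => simpa using ih k b
  rw [hadd, hl2, Option.bind_some, hk2]

/-- The heterogeneous dependency matrix of any heterogeneous out-tree
`(par, σ)` has no two equal rows and no two equal columns. -/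
theorem depMatrix_rows_cols_nodup {N : ℕ} (par : Fin N → Option (Fin N))
    (σ : Equiv.Perm (Fin N)) (hwf : WFParent par) :
    (∀ i₁ i₂ : Fin N, (∀ j, depMatrix par σ i₁ j = depMatrix par σ i₂ j) → i₁ = i₂) ∧
    (∀ j₁ j₂ : Fin N, (∀ i, depMatrix par σ i j₁ = depMatrix par σ i j₂) → j₁ = j₂) := by
  have key : ∀ a b : Fin N,
      (a = b ∨ IsAncestor par a b) → (b = a ∨ IsAncestor par b a) → a = b := by
    intro a b h1 h2
    rcases h1 with rfl | h1
    · rfl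
    rcases h2 with rfl | h2
    · rfl
    exact absurd (isAncestor_trans h1 h2) (not_isAncestor_self hwf a)
  constructor
  · intro i₁ i₂ h
    have h1 := h (σ i₁)
    have h2 := h (σ i₂)
    simp only [depMatrix, Equiv.symm_apply_apply, decide_eq_decide] at h1 h2
    have e1 : i₁ = i₂ ∨ IsAncestor par i₁ i₂ := h1.mp (Or.inl trivial)
    have e2 : i₂ = i₁ ∨ IsAncestor par i₂ i₁ := h2.mpr (Or.inl trivial)
    exact key i₁ i₂ e1 e2
  · intro j₁ j₂ h
    set a := σ.symm j₁
    set b := σ.symm j₂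
    have h1 := h a
    have h2 := h b
    simp only [depMatrix, decide_eq_decide] at h1 h2
    have e1 : b = a ∨ IsAncestor par b a := h1.mp (Or.inl rfl)
    have e2 : a = b ∨ IsAncestor par a b := h2.mpr (Or.inl rfl)
    have : a = b := key a b e2 e1
    have : σ.symm j₁ = σ.symm j₂ := this
    exact σ.symm.injective this
end

section
/- For N ≥ 1, the number of heterogeneous out-trees with N non-root nodes and N labeled edges, i.e., the cardinality of the set of pairs (par, σ) where par : Fin N → Option (Fin N) is a well-founded parent function and σ : Fin N → Fin N is a bijection, equals (N+1)^(N−1) · N!. -/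
namespace HetTreeAux

open Function

variable {N : ℕ}

lemma parIter_succ (par : Fin N → Option (Fin N)) (k : ℕ) (i : Fin N) :
    parIter par (k + 1) i = (par i).bind (parIter par k) := rfl

lemma parIter_one (par : Fin N → Option (Fin N)) (i : Fin N) : parIter par 1 i = par i := by
  cases h : par i <;> simp [parIter, h]

lemma parIter_add (par : Fin N → Option (Fin N)) (a b : ℕ) (i : Fin N) :
    parIter par (a + b) i = (parIter par a i).bind (parIter par b) := by
  induction a generalizing i with
  | zero => simp [parIter]
  | succ a ih =>
      have h : a + 1 + b = (a + b) + 1 := by omega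
      rw [h, parIter_succ, parIter_succ]
      cases hp : par i with
      | none => rfl
      | some x => exact ih x

/-- `i`'s ancestry chain terminates. -/
def Terminatess (par : Fin N → Option (Fin N)) (i : Fin N) : Prop :=
  ∃ k, parIter par k i = none

noncomputable def pdepth (par : Fin N → Option (Fin N)) (i : Fin N) : ℕ :=
  sInf {k | parIter par k i = none}

lemma pdepth_spec {par : Fin N → Option (Fin N)} {i : Fin N} (h : Terminatess par i) :
    parIter par (pdepth par i) i = none := Nat.sInf_mem h

lemma pdepth_pos {par : Fin N → Option (Fin N)} {i : Fin N} (h : Terminatess par i) :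
    0 < pdepth par i := by
  rcases Nat.eq_zero_or_pos (pdepth par i) with h0 | h1
  · exfalso
    have hs := pdepth_spec h
    rw [h0] at hs
    simp [parIter] at hs
  · exact h1

lemma pdepth_lt {par : Fin N → Option (Fin N)} (hterm : ∀ j, Terminatess par j)
    {i a : Fin N} (h : par i = some a) : pdepth par a < pdepth par i := by
  have h1 := pdepth_spec (hterm i)
  have h2 := pdepth_pos (hterm i)
  obtain ⟨m, hm⟩ : ∃ m, pdepth par i = m + 1 := ⟨pdepth par i - 1, by omega⟩
  rw [hm, parIter_succ, h] at h1
  have : pdepth par a ≤ m := Nat.sInf_le h1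
  omega

lemma wfParent_iff_terminates (par : Fin N → Option (Fin N)) :
    WFParent par ↔ ∀ i, Terminatess par i := by
  constructor
  · intro h i
    induction i using h.induction with
    | _ i IH =>
      cases hp : par i with
      | none => exact ⟨1, by rw [parIter_one, hp]⟩
      | some a =>
          obtain ⟨k, hk⟩ := IH a hp
          exact ⟨k + 1, by rw [parIter_succ, hp]; exact hk⟩
  · intro h
    exact Subrelation.wf (fun {a i} hai => pdepth_lt h hai)
      (InvImage.wf (pdepth par) Nat.lt_wfRel.wf)

/-- `i` reaches `r` by iterating (possibly zero times). -/
def Reaches (par : Fin N → Option (Fin N)) (i r : Fin N) : Prop :=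
  ∃ k, parIter par k i = some r

lemma reaches_iff (par : Fin N → Option (Fin N)) (i r : Fin N) :
    Reaches par i r ↔ (r = i ∨ IsAncestor par r i) := by
  constructor
  · rintro ⟨k, hk⟩
    cases k with
    | zero => left; cases hk; rfl
    | succ m => right; exact ⟨m + 1, Nat.succ_pos m, hk⟩
  · rintro (rfl | ⟨k, _, hk⟩)
    · exact ⟨0, rfl⟩
    · exact ⟨k, hk⟩

lemma isAncestor_irrefl {par : Fin N → Option (Fin N)} (hterm : ∀ j, Terminatess par j)
    (i : Fin N) : ¬ IsAncestor par i i := by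
  rintro ⟨k, hk, hki⟩
  have hrep : ∀ n, parIter par (n * k) i = some i := by
    intro n
    induction n with
    | zero => simp [parIter]
    | succ n ih => rw [Nat.succ_mul, parIter_add, ih]; exact hki
  obtain ⟨m, hm⟩ := hterm i
  have hle : m ≤ m * k := Nat.le_mul_of_pos_right m hk
  have h2 := hrep m
  rw [show m * k = m + (m * k - m) by omega, parIter_add, hm] at h2
  simp at h2

lemma parIter_update_of_avoid {par : Fin N → Option (Fin N)} {u : Fin N} {w : Option (Fin N)} :
    ∀ {k : ℕ} {x : Fin N}, (∀ j < k, parIter par j x ≠ some u) →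
      parIter (Function.update par u w) k x = parIter par k x := by
  intro k
  induction k with
  | zero => intro x _; rfl
  | succ k ih =>
      intro x h
      have hxu : x ≠ u := by
        intro he
        exact h 0 (Nat.succ_pos k) (by rw [he]; rfl)
      rw [parIter_succ, parIter_succ, Function.update_of_ne hxu]
      cases hx : par x with
      | none => rfl
      | some a =>
          show parIter (Function.update par u w) k a = parIter par k a
          refine ih fun j hj hja => ?_
          have := h (j + 1) (by omega)
          rw [parIter_succ, hx] at this
          exact this hja

lemma wfParent_update_iff {par : Fin N → Option (Fin N)} (hwf : WFParent par)
    {u v : Fin N} (hu : par u = none) :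
    WFParent (Function.update par u (some v)) ↔ ¬ Reaches par v u := by
  have hterm := (wfParent_iff_terminates par).mp hwf
  constructor
  · intro hwf' hre
    obtain ⟨k, hk⟩ := hre
    have hne : Set.Nonempty {j | parIter par j v = some u} := ⟨k, hk⟩
    have hm : parIter par (sInf {j | parIter par j v = some u}) v = some u := Nat.sInf_mem hne
    have hmin : ∀ j < sInf {j | parIter par j v = some u}, parIter par j v ≠ some u :=
      fun j hj => Nat.notMem_of_lt_sInf hj
    have h1 : parIter (Function.update par u (some v)) (sInf {j | parIter par j v = some u}) v
        = some u := by rw [parIter_update_of_avoid hmin]; exact hm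
    have hterm' := (wfParent_iff_terminates _).mp hwf'
    refine isAncestor_irrefl hterm' u
      ⟨sInf {j | parIter par j v = some u} + 1, Nat.succ_pos _, ?_⟩
    rw [parIter_succ, Function.update_self]
    exact h1
  · intro hre
    rw [wfParent_iff_terminates]
    have havoid : ∀ j, parIter par j v ≠ some u := fun j h => hre ⟨j, h⟩
    have htv : Terminatess (Function.update par u (some v)) v := by
      obtain ⟨m, hm⟩ := hterm v
      exact ⟨m, by rw [parIter_update_of_avoid fun j _ => havoid j]; exact hm⟩
    have htu : Terminatess (Function.update par u (some v)) u := by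
      obtain ⟨m, hm⟩ := htv
      refine ⟨m + 1, ?_⟩
      rw [parIter_succ, Function.update_self]
      exact hm
    intro x
    induction x using hwf.induction with
    | _ x IH =>
      by_cases hxu : x = u
      · subst hxu; exact htu
      · cases hx : par x with
        | none => exact ⟨1, by rw [parIter_one, Function.update_of_ne hxu, hx]⟩
        | some a =>
            obtain ⟨m, hm⟩ := IH a hx
            exact ⟨m + 1, by rw [parIter_succ, Function.update_of_ne hxu, hx]; exact hm⟩

lemma wfParent_of_sub {par par' : Fin N → Option (Fin N)} (hwf : WFParent par)
    (h : ∀ x, par' x = par x ∨ par' x = none) : WFParent par' := by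
  have hterm := (wfParent_iff_terminates par).mp hwf
  have key : ∀ (a x : Fin N), par' x = some a → pdepth par a < pdepth par x := by
    intro a x hx
    rcases h x with h' | h'
    · rw [h'] at hx; exact pdepth_lt hterm hx
    · rw [h'] at hx; cases hx
  exact Subrelation.wf (fun {a x} hax => key a x hax) (InvImage.wf (pdepth par) Nat.lt_wfRel.wf)

lemma exists_reaches_root {par : Fin N → Option (Fin N)} (hwf : WFParent par) (i : Fin N) :
    ∃ r, Reaches par i r ∧ par r = none := by
  induction i using hwf.induction with
  | _ i IH =>
    cases hi : par i with
    | none => exact ⟨i, ⟨0, rfl⟩, hi⟩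
    | some a =>
        obtain ⟨r, ⟨k, hk⟩, hrn⟩ := IH a hi
        exact ⟨r, ⟨k + 1, by rw [parIter_succ, hi]; exact hk⟩, hrn⟩

lemma reaches_root_unique {par : Fin N → Option (Fin N)} {i r r' : Fin N}
    (h : Reaches par i r) (hr : par r = none) (h' : Reaches par i r') (hr' : par r' = none) :
    r = r' := by
  have aux : ∀ {k k' : ℕ} {a b : Fin N}, k ≤ k' → parIter par k i = some a → par a = none →
      parIter par k' i = some b → a = b := by
    intro k k' a b hle h1 han h2
    rw [show k' = k + (k' - k) by omega, parIter_add, h1] at h2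
    change parIter par (k' - k) a = some b at h2
    cases hd : k' - k with
    | zero => rw [hd] at h2; simp [parIter] at h2; exact h2
    | succ m =>
        rw [hd, parIter_succ, han] at h2
        simp at h2
  obtain ⟨k, hk⟩ := h
  obtain ⟨k', hk'⟩ := h'
  rcases le_total k k' with hle | hle
  · exact aux hle hk hr hk'
  · exact (aux hle hk' hr' hk).symm

noncomputable def rootOf (par : Fin N → Option (Fin N)) (i : Fin N) : Fin N :=
  @dite _ (∃ r, Reaches par i r ∧ par r = none) (Classical.propDecidable _)
    (fun h => h.choose) (fun _ => i)

lemma rootOf_spec {par : Fin N → Option (Fin N)} (hwf : WFParent par) (i : Fin N) :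
    Reaches par i (rootOf par i) ∧ par (rootOf par i) = none := by
  rw [rootOf, dif_pos (exists_reaches_root hwf i)]
  exact (exists_reaches_root hwf i).choose_spec

lemma rootOf_eq {par : Fin N → Option (Fin N)} (hwf : WFParent par) {i r : Fin N}
    (h : Reaches par i r) (hr : par r = none) : rootOf par i = r :=
  reaches_root_unique (rootOf_spec hwf i).1 (rootOf_spec hwf i).2 h hr

end HetTreeAux

open scoped Classical

namespace HetTreeAux

variable {N : ℕ}

lemma nat_card_sigma {β : Type} [Fintype β] (f : β → Type) [∀ b, Finite (f b)] :
    Nat.card (Σ b, f b) = ∑ b, Nat.card (f b) := by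
  letI : ∀ b, Fintype (f b) := fun b => Fintype.ofFinite (f b)
  simp [Nat.card_eq_fintype_card, Fintype.card_sigma]

lemma nat_card_fiberwise {α β : Type} [Finite α] [Fintype β] (f : α → β) :
    Nat.card α = ∑ b, Nat.card {a // f a = b} := by
  rw [← Nat.card_congr (Equiv.sigmaFiberEquiv f), nat_card_sigma]

noncomputable def suppCard (par : Fin N → Option (Fin N)) : ℕ :=
  Nat.card {x : Fin N // par x ≠ none}

lemma sum_card_reaches {par : Fin N → Option (Fin N)} (hwf : WFParent par) :
    ∑ u : {u : Fin N // par u = none}, Nat.card {v : Fin N // Reaches par v u.1} = N := by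
  have h := nat_card_fiberwise
    (fun v : Fin N => (⟨rootOf par v, (rootOf_spec hwf v).2⟩ : {u : Fin N // par u = none}))
  rw [Nat.card_eq_fintype_card, Fintype.card_fin] at h
  refine Eq.trans (Finset.sum_congr rfl fun u _ => ?_) h.symm
  refine Nat.card_congr (Equiv.subtypeEquivRight fun v => ?_)
  constructor
  · intro hre
    exact Subtype.ext (rootOf_eq hwf hre u.2)
  · intro he
    have hv : rootOf par v = u.1 := congrArg Subtype.val he
    exact hv ▸ (rootOf_spec hwf v).1

lemma nat_card_subtype_le {α : Type} [Fintype α] (p : α → Prop) :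
    Nat.card {x // p x} ≤ Fintype.card α := by
  have := Nat.card_le_card_of_injective (Subtype.val : {x // p x} → α) Subtype.val_injective
  simpa [Nat.card_eq_fintype_card] using this

lemma nat_card_subtype_compl {α : Type} [Fintype α] (p : α → Prop) :
    Nat.card {x // ¬ p x} = Fintype.card α - Nat.card {x // p x} := by
  simp only [Nat.card_eq_fintype_card]
  exact Fintype.card_subtype_compl p

lemma card_ext {par : Fin N → Option (Fin N)} (hwf : WFParent par) :
    Nat.card {p : Fin N × Fin N // par p.1 = none ∧ ¬ Reaches par p.2 p.1}
      = (N - 1 - suppCard par) * N := by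
  have e : {p : Fin N × Fin N // par p.1 = none ∧ ¬ Reaches par p.2 p.1}
      ≃ Σ u : {u : Fin N // par u = none}, {v : Fin N // ¬ Reaches par v u.1} :=
    { toFun := fun p => ⟨⟨p.1.1, p.2.1⟩, ⟨p.1.2, p.2.2⟩⟩
      invFun := fun q => ⟨(q.1.1, q.2.1), q.1.2, q.2.2⟩
      left_inv := fun p => rfl
      right_inv := fun q => rfl }
  rw [Nat.card_congr e, nat_card_sigma]
  have hcompl : ∀ u : {u : Fin N // par u = none},
      Nat.card {v : Fin N // ¬ Reaches par v u.1}
        = N - Nat.card {v : Fin N // Reaches par v u.1} := by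
    intro u
    rw [nat_card_subtype_compl, Fintype.card_fin]
  have hle : ∀ u : {u : Fin N // par u = none},
      Nat.card {v : Fin N // Reaches par v u.1} ≤ N := by
    intro u
    have := nat_card_subtype_le (fun v : Fin N => Reaches par v u.1)
    simpa using this
  have hkey : (∑ u : {u : Fin N // par u = none},
        Nat.card {v : Fin N // ¬ Reaches par v u.1}) + N
      = Fintype.card {u : Fin N // par u = none} * N := by
    have h1 : (∑ u : {u : Fin N // par u = none},
          Nat.card {v : Fin N // ¬ Reaches par v u.1})
        + (∑ u : {u : Fin N // par u = none}, Nat.card {v : Fin N // Reaches par v u.1})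
        = ∑ _u : {u : Fin N // par u = none}, N := by
      rw [← Finset.sum_add_distrib]
      exact Finset.sum_congr rfl fun u _ => by rw [hcompl u, Nat.sub_add_cancel (hle u)]
    rw [sum_card_reaches hwf, Finset.sum_const, Finset.card_univ, smul_eq_mul] at h1
    exact h1
  have hR : Fintype.card {u : Fin N // par u = none} = N - suppCard par := by
    have e2 : {u : Fin N // par u = none} ≃ {u : Fin N // ¬ (par u ≠ none)} :=
      Equiv.subtypeEquivRight fun u => by simp
    rw [Fintype.card_congr e2, Fintype.card_subtype_compl, Fintype.card_fin, suppCard,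
      Nat.card_eq_fintype_card]
  rw [hR] at hkey
  have h2 : (N - 1 - suppCard par) * N = (N - suppCard par) * N - N := by
    rw [show N - 1 - suppCard par = (N - suppCard par) - 1 from by omega, tsub_mul, one_mul]
  omega

end HetTreeAux

namespace HetTreeAux

variable {N : ℕ}

noncomputable def parOf {k : ℕ} (s : Fin k → Fin N × Fin N) : Fin N → Option (Fin N) :=
  fun x => @dite _ (∃ i, (s i).1 = x) (Classical.propDecidable _)
    (fun h => some (s h.choose).2) (fun _ => none)

lemma parOf_eq_some {k : ℕ} {s : Fin k → Fin N × Fin N}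
    (hinj : Function.Injective fun i => (s i).1) {i : Fin k} {x : Fin N}
    (h : (s i).1 = x) : parOf s x = some (s i).2 := by
  have hex : ∃ j, (s j).1 = x := ⟨i, h⟩
  simp only [parOf]
  rw [dif_pos hex, hinj (hex.choose_spec.trans h.symm)]

lemma parOf_eq_none {k : ℕ} {s : Fin k → Fin N × Fin N} {x : Fin N}
    (h : ∀ i, (s i).1 ≠ x) : parOf s x = none := by
  simp only [parOf]
  rw [dif_neg]
  rintro ⟨i, hi⟩
  exact h i hi

lemma parOf_ne_none {k : ℕ} {s : Fin k → Fin N × Fin N} {x : Fin N} :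
    parOf s x ≠ none ↔ ∃ i, (s i).1 = x := by
  constructor
  · intro h
    by_contra hc
    push_neg at hc
    exact h (parOf_eq_none hc)
  · rintro ⟨i, hi⟩ h
    simp only [parOf] at h
    rw [dif_pos ⟨i, hi⟩] at h
    exact nomatch h

def ValidSeq (N k : ℕ) : Type :=
  {s : Fin k → Fin N × Fin N // (Function.Injective fun i => (s i).1) ∧ WFParent (parOf s)}

instance (N k : ℕ) : Finite (ValidSeq N k) := by
  unfold ValidSeq; infer_instance

noncomputable instance (N k : ℕ) : Fintype (ValidSeq N k) := Fintype.ofFinite _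

lemma init_inj {k : ℕ} {t : Fin (k + 1) → Fin N × Fin N}
    (hinj : Function.Injective fun i => (t i).1) :
    Function.Injective fun i : Fin k => (t i.castSucc).1 := fun a b h =>
  Fin.castSucc_injective k (hinj h)

lemma parOf_eq_update {k : ℕ} {t : Fin (k + 1) → Fin N × Fin N}
    (hinj : Function.Injective fun i => (t i).1) :
    parOf t = Function.update (parOf fun i : Fin k => t i.castSucc)
      (t (Fin.last k)).1 (some (t (Fin.last k)).2) := by
  funext x
  by_cases hx : x = (t (Fin.last k)).1
  · subst hx
    rw [Function.update_self]
    exact parOf_eq_some hinj rfl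
  · rw [Function.update_of_ne hx]
    by_cases hex : ∃ i : Fin k, (t i.castSucc).1 = x
    · obtain ⟨i, hi⟩ := hex
      rw [parOf_eq_some hinj hi, parOf_eq_some (init_inj hinj) hi]
    · push_neg at hex
      have hall : ∀ j : Fin (k + 1), (t j).1 ≠ x := by
        intro j
        rcases Fin.eq_castSucc_or_eq_last j with ⟨i, rfl⟩ | rfl
        · exact hex i
        · exact fun hl => hx hl.symm
      rw [parOf_eq_none hall, parOf_eq_none hex]

lemma parOf_init_last {k : ℕ} {t : Fin (k + 1) → Fin N × Fin N}
    (hinj : Function.Injective fun i => (t i).1) :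
    parOf (fun i : Fin k => t i.castSucc) (t (Fin.last k)).1 = none := by
  refine parOf_eq_none fun i hi => ?_
  have h2 := hinj hi
  exact absurd h2 (Fin.ne_of_lt (Fin.castSucc_lt_last i))

noncomputable def seqInit {k : ℕ} (s : ValidSeq N (k + 1)) : ValidSeq N k :=
  ⟨fun i => s.1 i.castSucc, init_inj s.2.1, by
    refine wfParent_of_sub s.2.2 fun x => ?_
    by_cases hex : ∃ i : Fin k, (s.1 i.castSucc).1 = x
    · obtain ⟨i, hi⟩ := hex
      left
      rw [parOf_eq_some (init_inj s.2.1) hi, parOf_eq_some s.2.1 hi]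
    · push_neg at hex
      right
      exact parOf_eq_none hex⟩

noncomputable def fiberEquivExt {k : ℕ} (s : ValidSeq N k) :
    {s' : ValidSeq N (k + 1) // seqInit s' = s} ≃
      {p : Fin N × Fin N // parOf s.1 p.1 = none ∧ ¬ Reaches (parOf s.1) p.2 p.1} where
  toFun x := ⟨x.1.1 (Fin.last k), by
    obtain ⟨⟨t, hinj, hwf⟩, hres⟩ := x
    have hs1 : s.1 = fun i : Fin k => t i.castSucc := (congrArg Subtype.val hres).symm
    have hu : parOf s.1 (t (Fin.last k)).1 = none := by
      rw [hs1]; exact parOf_init_last hinj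
    refine ⟨hu, ?_⟩
    have hupd : parOf t
        = Function.update (parOf s.1) (t (Fin.last k)).1 (some (t (Fin.last k)).2) := by
      rw [parOf_eq_update hinj, ← hs1]
    rw [hupd] at hwf
    exact (wfParent_update_iff s.2.2 hu).mp hwf⟩
  invFun e := ⟨⟨Fin.snoc s.1 e.1, by
      have hchild : ∀ i : Fin k, (s.1 i).1 ≠ (e.1).1 := by
        intro i hi
        have h1 := parOf_eq_some s.2.1 hi
        rw [e.2.1] at h1
        exact nomatch h1
      have hinj : Function.Injective
          fun i : Fin (k + 1) => ((Fin.snoc s.1 e.1 : Fin (k + 1) → Fin N × Fin N) i).1 := by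
        intro a b hab
        rcases Fin.eq_castSucc_or_eq_last a with ⟨i, rfl⟩ | rfl <;>
          rcases Fin.eq_castSucc_or_eq_last b with ⟨j, rfl⟩ | rfl <;>
            simp only [Fin.snoc_castSucc, Fin.snoc_last] at hab
        · exact congrArg Fin.castSucc (s.2.1 hab)
        · exact absurd hab (hchild i)
        · exact absurd hab.symm (hchild j)
        · rfl
      refine ⟨hinj, ?_⟩
      have hinit : (fun i : Fin k => (Fin.snoc s.1 e.1 : Fin (k + 1) → Fin N × Fin N) i.castSucc)
          = s.1 := funext fun i => by simp
      have hupd : parOf (Fin.snoc s.1 e.1 : Fin (k + 1) → Fin N × Fin N)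
          = Function.update (parOf s.1) e.1.1 (some e.1.2) := by
        rw [parOf_eq_update hinj, hinit]
        simp only [Fin.snoc_last]
      rw [hupd]
      exact (wfParent_update_iff s.2.2 e.2.1).mpr e.2.2⟩, by
    apply Subtype.ext
    funext i
    show (Fin.snoc s.1 e.1 : Fin (k + 1) → Fin N × Fin N) i.castSucc = s.1 i
    simp⟩
  left_inv x := by
    obtain ⟨⟨t, ht⟩, hres⟩ := x
    apply Subtype.ext
    apply Subtype.ext
    have hs1 : s.1 = fun i : Fin k => t i.castSucc := (congrArg Subtype.val hres).symm
    show Fin.snoc s.1 (t (Fin.last k)) = t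
    rw [hs1]
    exact Fin.snoc_init_self t
  right_inv e := Subtype.ext (by simp)

lemma suppCard_parOf {k : ℕ} (s : ValidSeq N k) : suppCard (parOf s.1) = k := by
  have e : Fin k ≃ {x : Fin N // parOf s.1 x ≠ none} := by
    refine Equiv.ofBijective (fun i => ⟨(s.1 i).1, parOf_ne_none.mpr ⟨i, rfl⟩⟩) ⟨?_, ?_⟩
    · intro a b hab
      exact s.2.1 (congrArg Subtype.val hab)
    · rintro ⟨x, hx⟩
      obtain ⟨i, hi⟩ := parOf_ne_none.mp hx
      exact ⟨i, Subtype.ext hi⟩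
  rw [suppCard, ← Nat.card_congr e, Nat.card_eq_fintype_card, Fintype.card_fin]

lemma card_validSeq_zero : Nat.card (ValidSeq N 0) = 1 := by
  have hwf : WFParent (parOf (fun i : Fin 0 => (i.elim0 : Fin N × Fin N))) := by
    rw [wfParent_iff_terminates]
    intro i
    exact ⟨1, by rw [parIter_one]; exact parOf_eq_none fun j => j.elim0⟩
  haveI : Unique (ValidSeq N 0) :=
    { default := ⟨fun i => i.elim0, fun a => a.elim0, hwf⟩
      uniq := fun s => Subtype.ext (funext fun i => i.elim0) }
  exact Nat.card_unique

lemma card_validSeq (k : ℕ) :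
    Nat.card (ValidSeq N k) = (N - 1).descFactorial k * N ^ k := by
  induction k with
  | zero => simpa using card_validSeq_zero
  | succ k ih =>
      rw [nat_card_fiberwise (seqInit (N := N) (k := k))]
      have hfib : ∀ s : ValidSeq N k,
          Nat.card {s' : ValidSeq N (k + 1) // seqInit s' = s} = (N - 1 - k) * N := by
        intro s
        rw [Nat.card_congr (fiberEquivExt s)]
        have h := card_ext s.2.2
        rw [suppCard_parOf s] at h
        exact h
      rw [Finset.sum_congr rfl fun s _ => hfib s, Finset.sum_const, Finset.card_univ,
        smul_eq_mul, ← Nat.card_eq_fintype_card, ih, Nat.descFactorial_succ, pow_succ]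
      ring

end HetTreeAux

namespace HetTreeAux

variable {N : ℕ}

def TreeK (N k : ℕ) : Type :=
  {par : Fin N → Option (Fin N) // WFParent par ∧ suppCard par = k}

instance (N k : ℕ) : Finite (TreeK N k) := by
  unfold TreeK; infer_instance

noncomputable instance (N k : ℕ) : Fintype (TreeK N k) := Fintype.ofFinite _

noncomputable def toTree {k : ℕ} (s : ValidSeq N k) : TreeK N k :=
  ⟨parOf s.1, s.2.2, suppCard_parOf s⟩

noncomputable def fiberEquivPerm {k : ℕ} (p : TreeK N k) :
    {s : ValidSeq N k // toTree s = p} ≃ (Fin k ≃ {x : Fin N // p.1 x ≠ none}) where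
  toFun s := by
    have hp : parOf s.1.1 = p.1 := congrArg Subtype.val s.2
    refine Equiv.ofBijective
      (fun i => ⟨(s.1.1 i).1, by rw [← hp]; exact parOf_ne_none.mpr ⟨i, rfl⟩⟩) ⟨?_, ?_⟩
    · intro a b hab
      exact s.1.2.1 (congrArg Subtype.val hab)
    · rintro ⟨x, hx⟩
      rw [← hp] at hx
      obtain ⟨i, hi⟩ := parOf_ne_none.mp hx
      exact ⟨i, Subtype.ext hi⟩
  invFun e := by
    refine ⟨⟨fun i => ((e i).1,
      Option.get (p.1 (e i).1) (Option.isSome_iff_ne_none.mpr (e i).2)), ?_, ?_⟩, ?_⟩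
    case refine_1 =>
      intro a b hab
      exact e.injective (Subtype.ext hab)
    all_goals
      have hinj : Function.Injective (fun i : Fin k => (((e i).1,
          Option.get (p.1 (e i).1) (Option.isSome_iff_ne_none.mpr (e i).2)) : Fin N × Fin N).1) :=
        fun a b hab => e.injective (Subtype.ext hab)
    all_goals
      have hpar : parOf (fun i : Fin k => (((e i).1,
          Option.get (p.1 (e i).1) (Option.isSome_iff_ne_none.mpr (e i).2)) : Fin N × Fin N))
          = p.1 := by
        funext x
        by_cases hx : p.1 x = none
        · rw [hx]
          refine parOf_eq_none fun i hi => ?_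
          have h2 := (e i).2
          rw [show (e i).1 = x from hi] at h2
          exact h2 hx
        · obtain ⟨i, hi⟩ := e.surjective ⟨x, hx⟩
          have h1 : ((e i).1 : Fin N) = x := congrArg Subtype.val hi
          rw [parOf_eq_some hinj h1, Option.some_get, h1]
    case refine_2 => rw [hpar]; exact p.2.1
    case refine_3 =>
      apply Subtype.ext
      exact hpar
  left_inv s := by
    have hp : parOf s.1.1 = p.1 := congrArg Subtype.val s.2
    apply Subtype.ext
    apply Subtype.ext
    funext i
    refine Prod.ext rfl ?_
    show Option.get (p.1 (s.1.1 i).1) _ = (s.1.1 i).2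
    have hsome : p.1 (s.1.1 i).1 = some (s.1.1 i).2 := by
      rw [← hp]; exact parOf_eq_some s.1.2.1 rfl
    apply Option.some_injective
    exact (Option.some_get _).trans hsome
  right_inv e := by
    ext i
    rfl

lemma nat_card_equiv_fin {β : Type} [Finite β] {k : ℕ} (h : Nat.card β = k) :
    Nat.card (Fin k ≃ β) = k.factorial := by
  letI := Fintype.ofFinite β
  have hc : Fintype.card β = k := by rw [← Nat.card_eq_fintype_card, h]
  have e : Fin k ≃ β := Fintype.equivOfCardEq (by rw [hc, Fintype.card_fin])
  rw [Nat.card_eq_fintype_card, Fintype.card_equiv e, Fintype.card_fin]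

lemma card_treeK_mul (k : ℕ) :
    Nat.card (TreeK N k) * k.factorial = (N - 1).descFactorial k * N ^ k := by
  rw [← card_validSeq k, nat_card_fiberwise (toTree (N := N) (k := k))]
  have hfib : ∀ p : TreeK N k, Nat.card {s : ValidSeq N k // toTree s = p} = k.factorial := by
    intro p
    rw [Nat.card_congr (fiberEquivPerm p)]
    exact nat_card_equiv_fin p.2.2
  rw [Finset.sum_congr rfl fun p _ => hfib p, Finset.sum_const, Finset.card_univ,
    smul_eq_mul, Nat.card_eq_fintype_card]

lemma card_treeK (k : ℕ) :
    Nat.card (TreeK N k) = (N - 1).choose k * N ^ k := by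
  have h := card_treeK_mul (N := N) k
  rw [Nat.descFactorial_eq_factorial_mul_choose] at h
  refine Nat.eq_of_mul_eq_mul_right (Nat.factorial_pos k) ?_
  rw [h]
  ring

lemma card_wfParent (hN : 1 ≤ N) :
    Nat.card {par : Fin N → Option (Fin N) // WFParent par} = (N + 1) ^ (N - 1) := by
  have hlt : ∀ p : {par : Fin N → Option (Fin N) // WFParent par}, suppCard p.1 < N := by
    intro p
    obtain ⟨r, _, hrn⟩ := exists_reaches_root p.2 ⟨0, hN⟩
    rw [suppCard, Nat.card_eq_fintype_card]
    have h := Fintype.card_subtype_lt (p := fun x => p.1 x ≠ none) (x := r) (by simp [hrn])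
    simpa using h
  rw [nat_card_fiberwise
    (fun p : {par : Fin N → Option (Fin N) // WFParent par} => (⟨suppCard p.1, hlt p⟩ : Fin N))]
  have hfib : ∀ b : Fin N,
      Nat.card {p : {par : Fin N → Option (Fin N) // WFParent par} //
        (⟨suppCard p.1, hlt p⟩ : Fin N) = b} = (N - 1).choose b.1 * N ^ b.1 := by
    intro b
    rw [← card_treeK]
    refine Nat.card_congr
      { toFun := fun q => ⟨q.1.1, q.1.2, congrArg Fin.val q.2⟩
        invFun := fun t => ⟨⟨t.1, t.2.1⟩, Fin.ext t.2.2⟩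
        left_inv := fun q => rfl
        right_inv := fun t => rfl }
  rw [Finset.sum_congr rfl fun b _ => hfib b,
    Fin.sum_univ_eq_sum_range (fun m => (N - 1).choose m * N ^ m) N]
  have hb := add_pow N 1 (N - 1)
  rw [show N - 1 + 1 = N from by omega] at hb
  rw [hb]
  refine Finset.sum_congr rfl fun m _ => ?_
  simp only [one_pow, Nat.cast_id, mul_one]
  ring

end HetTreeAux


/-- There are `(N+1)^(N-1) · N!` heterogeneous out-trees with `N`
non-root nodes and `N` labeled edges. -/
theorem card_heterogeneous_out_trees (N : ℕ) (hN : 1 ≤ N) :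
    Nat.card {t : (Fin N → Option (Fin N)) × Equiv.Perm (Fin N) // WFParent t.1} =
      (N + 1) ^ (N - 1) * Nat.factorial N := by
  have e : {t : (Fin N → Option (Fin N)) × Equiv.Perm (Fin N) // WFParent t.1}
      ≃ {par : Fin N → Option (Fin N) // WFParent par} × Equiv.Perm (Fin N) :=
    { toFun := fun t => (⟨t.1.1, t.2⟩, t.1.2)
      invFun := fun q => ⟨(q.1.1, q.2), q.1.2⟩
      left_inv := fun t => rfl
      right_inv := fun q => rfl }
  rw [Nat.card_congr e, Nat.card_prod, HetTreeAux.card_wfParent hN,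
    Nat.card_eq_fintype_card, Fintype.card_perm, Fintype.card_fin]
end

section
/- Any heterogeneous out-tree t = (par, σ) can be transformed into the depth-1 tree (par ≡ none, σ) by a finite sequence of applicable tree absorption operations, and the original tree t can be reconstructed from the depth-1 tree by applying the corresponding tree dilation operations in reverse order. -/
lemma parIter_succ' {N : ℕ} (par : Fin N → Option (Fin N)) (k : ℕ) (i : Fin N) :
    parIter par (k + 1) i = (parIter par k i).bind par := by
  induction k generalizing i with
  | zero => cases hp : par i <;> simp [parIter, hp]
  | succ k IH =>
    show (par i).bind (parIter par (k + 1)) = (parIter par (k + 1) i).bind par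
    cases hp : par i with
    | none => simp [parIter, hp]
    | some p =>
      simp only [parIter, hp, Option.bind_some]
      exact IH p

lemma no_cycle {N : ℕ} {par : Fin N → Option (Fin N)} (hwf : WFParent par) :
    ∀ i : Fin N, ∀ m : ℕ, 0 < m → parIter par m i ≠ some i := by
  intro i
  induction i using hwf.induction with
  | _ i IH =>
    intro m hm h
    obtain ⟨l, rfl⟩ : ∃ l, m = l + 1 := ⟨m - 1, by omega⟩
    cases hp : par i with
    | none => simp [parIter, hp] at h
    | some p =>
      have hpl : parIter par l p = some i := by
        have : (par i).bind (parIter par l) = some i := h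
        simpa [hp] using this
      have hcyc : parIter par (l + 1) p = some p := by
        rw [parIter_succ', hpl]; simpa using hp
      exact IH p hp (l + 1) (Nat.succ_pos l) hcyc

lemma exists_leaf {N : ℕ} {par : Fin N → Option (Fin N)} (hwf : WFParent par)
    (i₀ : Fin N) (h₀ : par i₀ ≠ none) :
    ∃ i j, IsLeaf par i ∧ par i = some j := by
  by_contra hno
  push_neg at hno
  have H : ∀ i : Fin N, par i ≠ none → ∃ x, par x = some i := by
    intro i hi
    by_contra hx
    push_neg at hx
    obtain ⟨j, hj⟩ := Option.ne_none_iff_exists'.mp hi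
    exact hno i j (fun x => hx x) hj
  have step : ∀ s : {i : Fin N // par i ≠ none}, ∃ t : {i : Fin N // par i ≠ none},
      par t.1 = some s.1 := by
    intro s
    obtain ⟨x, hx⟩ := H s.1 s.2
    exact ⟨⟨x, by rw [hx]; simp⟩, hx⟩
  choose f hf using step
  have key : ∀ k (s : {i : Fin N // par i ≠ none}),
      parIter par k (f^[k] s).1 = some s.1 := by
    intro k
    induction k with
    | zero => intro s; simp [parIter]
    | succ k IH =>
      intro s
      rw [Function.iterate_succ_apply, parIter_succ', IH (f s)]
      simpa using hf s
  obtain ⟨a, b, hab, heq⟩ := Finite.exists_ne_map_eq_of_infinite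
    (fun k => f^[k] (⟨i₀, h₀⟩ : {i : Fin N // par i ≠ none}))
  wlog hlt : a < b generalizing a b
  · exact this b a hab.symm heq.symm (by omega)
  have hsplit : f^[b] (⟨i₀, h₀⟩ : {i : Fin N // par i ≠ none})
      = f^[b - a] (f^[a] ⟨i₀, h₀⟩) := by
    rw [← Function.iterate_add_apply]
    congr 1
    omega
  have hkey := key (b - a) (f^[a] (⟨i₀, h₀⟩ : {i : Fin N // par i ≠ none}))
  rw [← hsplit, ← heq] at hkey
  exact no_cycle hwf _ (b - a) (by omega) hkey

open Classical in
lemma aux_tree {N : ℕ} : ∀ m : ℕ, ∀ par : Fin N → Option (Fin N), WFParent par →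
    (Finset.univ.filter fun x => par x ≠ none).card = m →
    ∃ (n : ℕ) (ps : Fin (n + 1) → Fin N → Option (Fin N)) (steps : Fin n → Fin N × Fin N),
      ps 0 = par ∧
      ps (Fin.last n) = (fun _ => none) ∧
      (∀ k : Fin n,
        AbsorbOK (ps k.castSucc) (steps k).1 (steps k).2 ∧
        ps k.succ = treeAbsorb (ps k.castSucc) (steps k).1) ∧
      (∀ k : Fin n,
        DilateOK (ps k.succ) (steps k).1 (steps k).2 ∧
        treeDilate (ps k.succ) (steps k).1 (steps k).2 = ps k.castSucc) := by
  intro m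
  induction m with
  | zero =>
    intro par hwf hcard
    have hpar : par = fun _ => none := by
      funext x
      by_contra hx
      have hx' : x ∈ Finset.univ.filter fun x => par x ≠ none := by
        simp [hx]
      rw [Finset.card_eq_zero.mp hcard] at hx'
      exact absurd hx' (Finset.notMem_empty x)
    exact ⟨0, fun _ => par, Fin.elim0, rfl, hpar, fun k => k.elim0, fun k => k.elim0⟩
  | succ m IH =>
    intro par hwf hcard
    have hne : (Finset.univ.filter fun x => par x ≠ none).Nonempty := by
      rw [← Finset.card_pos, hcard]; omega
    obtain ⟨i₀, hi₀⟩ := hne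
    have hi₀' : par i₀ ≠ none := (Finset.mem_filter.mp hi₀).2
    obtain ⟨i, j, hleaf, hij⟩ := exists_leaf hwf i₀ hi₀'
    set par' := treeAbsorb par i with hpar'
    have hupd : ∀ x, par' x = if x = i then none else par x := by
      intro x
      simp [hpar', treeAbsorb, Function.update_apply]
    have hwf' : WFParent par' := by
      refine Subrelation.wf (r := fun a b => par b = some a) ?_ hwf
      intro a b hab
      rw [hupd b] at hab
      split at hab
      · exact absurd hab (by simp)
      · exact hab
    have hcard' : (Finset.univ.filter fun x => par' x ≠ none).card = m := by
      have hset : (Finset.univ.filter fun x => par' x ≠ none)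
          = (Finset.univ.filter fun x => par x ≠ none).erase i := by
        ext x
        simp only [Finset.mem_filter, Finset.mem_erase, Finset.mem_univ, true_and]
        rw [hupd x]
        by_cases hx : x = i <;> simp [hx]
      rw [hset, Finset.card_erase_of_mem (by simp [hij]), hcard]; omega
    obtain ⟨n, ps, steps, h0, hl, habs, hdil⟩ := IH par' hwf' hcard'
    have hji : j ≠ i := by
      intro hji
      apply no_cycle hwf i 1 one_pos
      show (par i).bind (parIter par 0) = some i
      rw [hij, hji]
      rfl
    have hnoanc' : ∀ x, par' x ≠ some i := by
      intro x hx
      rw [hupd x] at hx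
      split at hx
      · exact absurd hx (by simp)
      · exact hleaf x hx
    set ps' : Fin (n + 2) → Fin N → Option (Fin N) :=
      Fin.cases par ps with hps'def
    set steps' : Fin (n + 1) → Fin N × Fin N := Fin.cases (i, j) steps with hst'def
    have hps0 : ps' 0 = par := rfl
    have hpsS : ∀ t : Fin (n + 1), ps' t.succ = ps t := by
      intro t; simp [hps'def]
    have hst0 : steps' 0 = (i, j) := rfl
    have hstS : ∀ t : Fin n, steps' t.succ = steps t := by
      intro t; simp [hst'def]
    refine ⟨n + 1, ps', steps', hps0, ?_, ?_, ?_⟩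
    · rw [← Fin.succ_last, hpsS, hl]
    · intro k
      induction k using Fin.cases with
      | zero =>
        constructor
        · rw [Fin.castSucc_zero, hps0, hst0]
          exact ⟨hleaf, hij⟩
        · show ps' (Fin.succ 0) = treeAbsorb (ps' (Fin.castSucc 0)) (steps' 0).1
          rw [hpsS, h0, Fin.castSucc_zero, hps0, hst0]
      | succ k' =>
        rw [← Fin.succ_castSucc, hpsS, hstS]
        show AbsorbOK (ps k'.castSucc) (steps k').1 (steps k').2 ∧
          ps' (Fin.succ k'.succ) = treeAbsorb (ps k'.castSucc) (steps k').1
        rw [hpsS]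
        exact habs k'
    · intro k
      induction k using Fin.cases with
      | zero =>
        have hpseq : ps' ((0 : Fin (n + 1)).succ) = par' := by
          show ps' (Fin.succ 0) = par'
          rw [hpsS, h0]
        rw [hpseq, hst0, Fin.castSucc_zero, hps0]
        refine ⟨⟨by rw [hupd]; simp, hji, ?_⟩, ?_⟩
        · rintro ⟨k, hk, hiter⟩
          obtain ⟨l, rfl⟩ : ∃ l, k = l + 1 := ⟨k - 1, by omega⟩
          rw [parIter_succ'] at hiter
          obtain ⟨a, _, ha2⟩ := Option.bind_eq_some_iff.mp hiter
          exact hnoanc' a ha2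
        · show treeDilate par' i j = par
          rw [hpar']
          simp only [treeDilate, treeAbsorb]
          rw [Function.update_idem, ← hij, Function.update_eq_self]
      | succ k' =>
        rw [← Fin.succ_castSucc, hpsS, hstS]
        show DilateOK (ps' (Fin.succ k'.succ)) (steps k').1 (steps k').2 ∧
          treeDilate (ps' (Fin.succ k'.succ)) (steps k').1 (steps k').2 = ps k'.castSucc
        rw [hpsS]
        exact hdil k'

/-- Any heterogeneous out-tree `(par, σ)` can be transformed into the
depth-1 tree by a finite sequence of applicable tree absorptions, and reconstructed
from the depth-1 tree by the corresponding tree dilations in reverse order. -/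
theorem tree_to_depth_one_by_absorption {N : ℕ} (par : Fin N → Option (Fin N))
    (σ : Equiv.Perm (Fin N)) (hwf : WFParent par) :
    ∃ (n : ℕ) (ps : Fin (n + 1) → Fin N → Option (Fin N)) (steps : Fin n → Fin N × Fin N),
      ps 0 = par ∧
      ps (Fin.last n) = (fun _ => none) ∧
      (∀ k : Fin n,
        AbsorbOK (ps k.castSucc) (steps k).1 (steps k).2 ∧
        ps k.succ = treeAbsorb (ps k.castSucc) (steps k).1) ∧
      (∀ k : Fin n,
        DilateOK (ps k.succ) (steps k).1 (steps k).2 ∧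
        treeDilate (ps k.succ) (steps k).1 (steps k).2 = ps k.castSucc) := by
  exact aux_tree (Finset.univ.filter fun x => par x ≠ none).card par hwf rfl
end

section
/- A binary matrix D ∈ {0,1}^{N×N} satisfies condition set P = {1°, 2°, 3°, 4°, 5°} if and only if D is the heterogeneous dependency matrix D(par, σ) of some heterogeneous out-tree (par, σ). -/
namespace CondPAux

variable {N : ℕ}

def Reaches (par : Fin N → Option (Fin N)) (a i : Fin N) : Prop :=
  ∃ k, parIter par k i = some a

lemma parIter_succ (par : Fin N → Option (Fin N)) (k : ℕ) (i : Fin N) :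
    parIter par (k + 1) i = (par i).bind (parIter par k) := rfl

lemma parIter_add (par : Fin N → Option (Fin N)) (k m : ℕ) (i : Fin N) :
    parIter par (k + m) i = (parIter par m i).bind (parIter par k) := by
  induction m generalizing i with
  | zero => simp [parIter]
  | succ m ih =>
    have h : k + (m + 1) = (k + m) + 1 := rfl
    rw [h, parIter_succ, parIter_succ]
    cases hp : par i with
    | none => simp
    | some p => simp [ih p]

lemma reaches_trans {par : Fin N → Option (Fin N)} {a b c : Fin N}
    (h₁ : Reaches par a b) (h₂ : Reaches par b c) : Reaches par a c := by
  obtain ⟨k₁, hk₁⟩ := h₁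
  obtain ⟨k₂, hk₂⟩ := h₂
  exact ⟨k₁ + k₂, by rw [parIter_add, hk₂]; exact hk₁⟩

lemma no_cycle {par : Fin N → Option (Fin N)} (hwf : WFParent par) :
    ∀ i k, 0 < k → parIter par k i ≠ some i := by
  intro i
  induction i using hwf.induction with
  | _ i ih =>
    intro k hk hc
    obtain ⟨k', rfl⟩ : ∃ k', k = k' + 1 := ⟨k - 1, by omega⟩
    rw [parIter_succ] at hc
    cases hp : par i with
    | none => rw [hp] at hc; simp at hc
    | some p =>
      rw [hp] at hc
      simp only [Option.bind_some] at hc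
      have hcyc : parIter par (1 + k') p = some p := by
        rw [parIter_add, hc]
        simp [parIter, hp]
      exact ih p hp (1 + k') (by omega) hcyc

lemma reaches_antisymm {par : Fin N → Option (Fin N)} (hwf : WFParent par)
    {a b : Fin N} (h₁ : Reaches par a b) (h₂ : Reaches par b a) : a = b := by
  obtain ⟨k₁, hk₁⟩ := h₁
  obtain ⟨k₂, hk₂⟩ := h₂
  have hcyc : parIter par (k₁ + k₂) a = some a := by
    rw [parIter_add, hk₂]; exact hk₁
  have hz : k₁ + k₂ = 0 := by
    by_contra h
    exact no_cycle hwf a (k₁ + k₂) (by omega) hcyc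
  have h0 : k₁ = 0 := by omega
  subst h0
  have : some b = some a := hk₁
  exact (Option.some.inj this).symm

lemma reaches_total {par : Fin N → Option (Fin N)} {a b r : Fin N}
    (ha : Reaches par a r) (hb : Reaches par b r) :
    Reaches par a b ∨ Reaches par b a := by
  obtain ⟨k₁, hk₁⟩ := ha
  obtain ⟨k₂, hk₂⟩ := hb
  rcases le_total k₁ k₂ with h | h
  · right
    refine ⟨k₂ - k₁, ?_⟩
    have h2 : parIter par ((k₂ - k₁) + k₁) r = some b := by
      rw [show (k₂ - k₁) + k₁ = k₂ by omega]; exact hk₂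
    rw [parIter_add, hk₁] at h2
    exact h2
  · left
    refine ⟨k₁ - k₂, ?_⟩
    have h2 : parIter par ((k₁ - k₂) + k₂) r = some a := by
      rw [show (k₁ - k₂) + k₂ = k₁ by omega]; exact hk₁
    rw [parIter_add, hk₂] at h2
    exact h2

lemma depMatrix_eq_true_iff (par : Fin N → Option (Fin N)) (σ : Equiv.Perm (Fin N))
    (r j : Fin N) :
    depMatrix par σ r j = true ↔ Reaches par (σ.symm j) r := by
  simp only [depMatrix, decide_eq_true_eq]
  constructor
  · rintro (rfl | ⟨k, _, hk⟩)
    · exact ⟨0, rfl⟩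
    · exact ⟨k, hk⟩
  · rintro ⟨k, hk⟩
    cases k with
    | zero =>
      left
      simpa [parIter] using hk.symm
    | succ k => exact Or.inr ⟨k + 1, Nat.succ_pos k, hk⟩

def cF (D : Fin N → Fin N → Bool) (c : Fin N) : Finset (Fin N) :=
  Finset.univ.filter (fun r => D r c = true)

lemma mem_cF {D : Fin N → Fin N → Bool} {r c : Fin N} :
    r ∈ cF D c ↔ D r c = true := by simp [cF]

lemma cF_chain {D : Fin N → Fin N → Bool} (h5 : Cond5 D) {r c₁ c₂ : Fin N}
    (h₁ : D r c₁ = true) (h₂ : D r c₂ = true) :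
    cF D c₁ ⊆ cF D c₂ ∨ cF D c₂ ⊆ cF D c₁ := by
  rcases h5 c₁ c₂ with h | h | h
  · left; intro x hx; exact mem_cF.mpr (h (mem_cF.mp hx))
  · right; intro x hx; exact mem_cF.mpr (h (mem_cF.mp hx))
  · exfalso
    have hmem : r ∈ colSet D c₁ ∩ colSet D c₂ := ⟨h₁, h₂⟩
    rw [h] at hmem
    exact hmem

lemma cF_injective {D : Fin N → Fin N → Bool} (h4 : Cond4 D) {c₁ c₂ : Fin N}
    (h : cF D c₁ = cF D c₂) : c₁ = c₂ := by
  apply h4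
  intro r
  have hiff : r ∈ cF D c₁ ↔ r ∈ cF D c₂ := by rw [h]
  rw [mem_cF, mem_cF] at hiff
  cases h₁ : D r c₁ <;> cases h₂ : D r c₂ <;> simp_all

lemma exists_minCol {D : Fin N → Fin N → Bool} (h1 : Cond1 D) (h5 : Cond5 D) (r : Fin N) :
    ∃ c, D r c = true ∧ ∀ c', D r c' = true → cF D c ⊆ cF D c' := by
  obtain ⟨c₀, hc₀⟩ := h1 r
  obtain ⟨c, hc, hmin⟩ := Finset.exists_min_image
      (Finset.univ.filter fun c => D r c = true) (fun c => (cF D c).card)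
      ⟨c₀, by simp [hc₀]⟩
  simp only [Finset.mem_filter, Finset.mem_univ, true_and] at hc
  refine ⟨c, hc, fun c' hc' => ?_⟩
  rcases cF_chain h5 hc hc' with h | h
  · exact h
  · have hle : (cF D c).card ≤ (cF D c').card := hmin c' (by simp [hc'])
    have heq := Finset.eq_of_subset_of_card_le h hle
    rw [heq]

lemma exists_secondCol {D : Fin N → Fin N → Bool} (h5 : Cond5 D) (r c₁ : Fin N)
    (h : ∃ c, D r c = true ∧ c ≠ c₁) :
    ∃ c, (D r c = true ∧ c ≠ c₁) ∧
      ∀ c', D r c' = true → c' ≠ c₁ → cF D c ⊆ cF D c' := by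
  obtain ⟨c₀, hc₀⟩ := h
  obtain ⟨c, hc, hmin⟩ := Finset.exists_min_image
      (Finset.univ.filter fun c => D r c = true ∧ c ≠ c₁) (fun c => (cF D c).card)
      ⟨c₀, by simp [hc₀.1, hc₀.2]⟩
  simp only [Finset.mem_filter, Finset.mem_univ, true_and] at hc
  refine ⟨c, hc, fun c' hc' hne => ?_⟩
  rcases cF_chain h5 hc.1 hc' with h | h
  · exact h
  · have hle : (cF D c).card ≤ (cF D c').card := hmin c' (by simp [hc', hne])
    have heq := Finset.eq_of_subset_of_card_le h hle
    rw [heq]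

end CondPAux

/-- A binary matrix `D ∈ {0,1}^{N×N}` satisfies condition set
`P = {1°, 2°, 3°, 4°, 5°}` iff it is the heterogeneous dependency matrix of some
heterogeneous out-tree. -/
theorem condP_iff_depMatrix {N : ℕ} (D : Fin N → Fin N → Bool) :
    CondP D ↔
      ∃ (par : Fin N → Option (Fin N)) (σ : Equiv.Perm (Fin N)),
        WFParent par ∧ depMatrix par σ = D := by
  constructor
  · -- Forward direction: CondP → tree
    rintro ⟨h1, h2, h3, h4, h5⟩
    classical
    choose minC hminD hminSub using fun r => CondPAux.exists_minCol h1 h5 r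
    have hinj : Function.Injective minC := by
      intro r₁ r₂ hrr
      apply h3
      intro c
      have key : ∀ a b : Fin N, minC a = minC b → D a c = true → D b c = true := by
        intro a b hab hac
        have hsub : CondPAux.cF D (minC a) ⊆ CondPAux.cF D c := hminSub a c hac
        have hb : b ∈ CondPAux.cF D (minC b) := CondPAux.mem_cF.mpr (hminD b)
        rw [← hab] at hb
        exact CondPAux.mem_cF.mp (hsub hb)
      have k1 := key r₁ r₂ hrr
      have k2 := key r₂ r₁ hrr.symm
      cases hc1 : D r₁ c <;> cases hc2 : D r₂ c <;> simp_all
    have hbij := Finite.injective_iff_bijective.mp hinj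
    let σ : Equiv.Perm (Fin N) := Equiv.ofBijective minC hbij
    have hσ : ∀ r, σ r = minC r := fun _ => rfl
    have hσsymm : ∀ c, minC (σ.symm c) = c := fun c => by
      rw [← hσ]; exact σ.apply_symm_apply c
    have hspec : ∀ r : Fin N, ∃ p : Option (Fin N),
        (∀ q, p = some q → D r (minC q) = true ∧ minC q ≠ minC r ∧
          ∀ c', D r c' = true → c' ≠ minC r → CondPAux.cF D (minC q) ⊆ CondPAux.cF D c') ∧
        (p = none → ∀ c, D r c = true → c = minC r) := by
      intro r
      by_cases h : ∃ c, D r c = true ∧ c ≠ minC r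
      · obtain ⟨c, ⟨hc1, hc2⟩, hmin⟩ := CondPAux.exists_secondCol h5 r (minC r) h
        refine ⟨some (σ.symm c), ?_, by simp⟩
        rintro q hq
        obtain rfl := Option.some.inj hq
        rw [hσsymm c]
        exact ⟨hc1, hc2, hmin⟩
      · push_neg at h
        exact ⟨none, by simp, fun _ c hc => h c hc⟩
    choose par hpar_some hpar_none using hspec
    have hstrict : ∀ r p, par r = some p →
        CondPAux.cF D (minC r) ⊂ CondPAux.cF D (minC p) := by
      intro r p hp
      obtain ⟨hD, hne, _⟩ := hpar_some r p hp
      have hsub : CondPAux.cF D (minC r) ⊆ CondPAux.cF D (minC p) := hminSub r (minC p) hD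
      refine Finset.ssubset_iff_subset_ne.mpr ⟨hsub, fun he => ?_⟩
      exact hne (CondPAux.cF_injective h4 he.symm)
    have hcard : ∀ r p, par r = some p →
        (CondPAux.cF D (minC r)).card < (CondPAux.cF D (minC p)).card :=
      fun r p hp => Finset.card_lt_card (hstrict r p hp)
    have hbound : ∀ r : Fin N, (CondPAux.cF D (minC r)).card ≤ N := fun r => by
      simpa using Finset.card_le_univ (CondPAux.cF D (minC r))
    have hwf : WFParent par := by
      refine Subrelation.wf
        (r := InvImage (· < ·) (fun x : Fin N => N - (CondPAux.cF D (minC x)).card))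
        ?_ (InvImage.wf _ Nat.lt_wfRel.wf)
      intro a b h
      have h1' := hcard b a h
      have h2' := hbound a
      show N - _ < N - _
      omega
    have claimA : ∀ (k : ℕ) (r a : Fin N), parIter par k r = some a →
        D r (minC a) = true := by
      intro k
      induction k with
      | zero =>
        intro r a h
        obtain rfl := Option.some.inj h
        exact hminD r
      | succ k ih =>
        intro r a h
        rw [CondPAux.parIter_succ] at h
        cases hp : par r with
        | none => rw [hp] at h; simp at h
        | some p =>
          rw [hp] at h
          simp only [Option.bind_some] at h
          have hDp := ih p a h
          obtain ⟨hrp, -, -⟩ := hpar_some r p hp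
          have hsub : CondPAux.cF D (minC p) ⊆ CondPAux.cF D (minC a) :=
            hminSub p (minC a) hDp
          exact CondPAux.mem_cF.mp (hsub (CondPAux.mem_cF.mpr hrp))
    have hzero : ∀ r j : Fin N, j = minC r → parIter par 0 r = some (σ.symm j) := by
      intro r j hj
      have hs : σ.symm j = r := by rw [hj, ← hσ r, σ.symm_apply_apply]
      rw [hs]
      rfl
    have claimB : ∀ (n : ℕ) (r j : Fin N), D r j = true →
        (CondPAux.cF D j).card ≤ n + (CondPAux.cF D (minC r)).card →
        ∃ k, parIter par k r = some (σ.symm j) := by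
      intro n
      induction n with
      | zero =>
        intro r j hDj hle
        by_cases hj : j = minC r
        · exact ⟨0, hzero r j hj⟩
        · exfalso
          have hsub : CondPAux.cF D (minC r) ⊆ CondPAux.cF D j := hminSub r j hDj
          have hne : CondPAux.cF D (minC r) ≠ CondPAux.cF D j :=
            fun he => hj (CondPAux.cF_injective h4 he).symm
          have hlt := Finset.card_lt_card (Finset.ssubset_iff_subset_ne.mpr ⟨hsub, hne⟩)
          omega
      | succ n ih =>
        intro r j hDj hle
        by_cases hj : j = minC r
        · exact ⟨0, hzero r j hj⟩
        · have hex : ∃ p, par r = some p := by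
            cases hp : par r with
            | some p => exact ⟨p, rfl⟩
            | none => exact absurd (hpar_none r hp j hDj) hj
          obtain ⟨p, hp⟩ := hex
          obtain ⟨hDp, hnep, hminp⟩ := hpar_some r p hp
          have hsubpj : CondPAux.cF D (minC p) ⊆ CondPAux.cF D j := hminp j hDj hj
          by_cases hjp : j = minC p
          · refine ⟨1, ?_⟩
            have hs : σ.symm j = p := by rw [hjp, ← hσ p, σ.symm_apply_apply]
            rw [hs]
            show (par r).bind (parIter par 0) = some p
            rw [hp]
            rfl
          · have hDpj : D p j = true :=
              CondPAux.mem_cF.mp (hsubpj (CondPAux.mem_cF.mpr (hminD p)))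
            have hclt := hcard r p hp
            have hlepj : (CondPAux.cF D (minC p)).card ≤ (CondPAux.cF D j).card :=
              Finset.card_le_card hsubpj
            obtain ⟨k, hk⟩ := ih p j hDpj (by omega)
            refine ⟨k + 1, ?_⟩
            rw [CondPAux.parIter_succ, hp]
            simpa using hk
    refine ⟨par, σ, hwf, ?_⟩
    funext r j
    by_cases hD : D r j = true
    · rw [hD]
      exact (CondPAux.depMatrix_eq_true_iff par σ r j).mpr
        (claimB (CondPAux.cF D j).card r j hD (by omega))
    · have hD' : D r j = false := by simpa using hD
      rw [hD', Bool.eq_false_iff]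
      intro htrue
      obtain ⟨k, hk⟩ := (CondPAux.depMatrix_eq_true_iff par σ r j).mp htrue
      have hDr := claimA k r (σ.symm j) hk
      rw [hσsymm j] at hDr
      exact hD hDr
  · -- Reverse direction: tree → CondP
    rintro ⟨par, σ, hwf, rfl⟩
    have E : ∀ r j, depMatrix par σ r j = true ↔ CondPAux.Reaches par (σ.symm j) r :=
      CondPAux.depMatrix_eq_true_iff par σ
    have hself : ∀ r : Fin N, CondPAux.Reaches par (σ.symm (σ r)) r := by
      intro r; rw [σ.symm_apply_apply]; exact ⟨0, rfl⟩
    refine ⟨?_, ?_, ?_, ?_, ?_⟩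
    · intro r
      exact ⟨σ r, (E r (σ r)).mpr (hself r)⟩
    · intro j
      exact ⟨σ.symm j, (E _ j).mpr ⟨0, rfl⟩⟩
    · intro r₁ r₂ h
      have h12 : CondPAux.Reaches par r₁ r₂ := by
        have hh := (E r₂ (σ r₁)).mp (by rw [← h (σ r₁)]; exact (E r₁ (σ r₁)).mpr (hself r₁))
        rwa [σ.symm_apply_apply] at hh
      have h21 : CondPAux.Reaches par r₂ r₁ := by
        have hh := (E r₁ (σ r₂)).mp (by rw [h (σ r₂)]; exact (E r₂ (σ r₂)).mpr (hself r₂))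
        rwa [σ.symm_apply_apply] at hh
      exact CondPAux.reaches_antisymm hwf h12 h21
    · intro c₁ c₂ h
      have h12 : CondPAux.Reaches par (σ.symm c₁) (σ.symm c₂) :=
        (E (σ.symm c₂) c₁).mp (by rw [h (σ.symm c₂)]; exact (E _ c₂).mpr ⟨0, rfl⟩)
      have h21 : CondPAux.Reaches par (σ.symm c₂) (σ.symm c₁) :=
        (E (σ.symm c₁) c₂).mp (by rw [← h (σ.symm c₁)]; exact (E _ c₁).mpr ⟨0, rfl⟩)
      exact σ.symm.injective (CondPAux.reaches_antisymm hwf h12 h21)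
    · intro c₁ c₂
      by_cases hdis : colSet (depMatrix par σ) c₁ ∩ colSet (depMatrix par σ) c₂ = ∅
      · exact Or.inr (Or.inr hdis)
      · obtain ⟨r, hr₁, hr₂⟩ := Set.nonempty_iff_ne_empty.mpr hdis
        have hr₁' := (E r c₁).mp hr₁
        have hr₂' := (E r c₂).mp hr₂
        rcases CondPAux.reaches_total hr₁' hr₂' with h | h
        · right; left
          intro x hx
          exact (E x c₁).mpr (CondPAux.reaches_trans h ((E x c₂).mp hx))
        · left
          intro x hx
          exact (E x c₂).mpr (CondPAux.reaches_trans h ((E x c₁).mp hx))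
end

section
/- If a binary matrix D ∈ {0,1}^{n×n} satisfies conditions 1° and 5°, then for every row r of D there exists a column c such that r belongs to the unique element set J_{S_c}. -/
/-- If a binary `n × n` matrix satisfies conditions `1°` and `5°`,
then every row belongs to the unique element set of some column. -/
theorem row_mem_JSet_of_cond1_cond5 {n : ℕ} (D : Fin n → Fin n → Bool)
    (h1 : Cond1 D) (h5 : Cond5 D) :
    ∀ r : Fin n, ∃ c : Fin n, r ∈ JSet D c := by
  intro r
  obtain ⟨c0, hc0⟩ := h1 r
  obtain ⟨c, hc, hmin⟩ := Finset.exists_min_image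
    (Finset.univ.filter fun c => D r c = true) (fun c => (colSet D c).ncard)
    ⟨c0, by simp [hc0]⟩
  simp only [Finset.mem_filter, Finset.mem_univ, true_and] at hc hmin
  refine ⟨c, hc, fun c' hss hr => ?_⟩
  have hlt : (colSet D c').ncard < (colSet D c).ncard :=
    Set.ncard_lt_ncard hss (Set.toFinite _)
  exact absurd (hmin c' hr) (not_le.mpr hlt)
end

section
/- If a K×N binary matrix D⁻ satisfies condition set P⁻ = {1°, 3°, 5°}, then for every column c of D⁻, the unique element set J_{S_c} contains at most one row: |J_{S_c}| ≤ 1. -/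
/-- If a `K × N` binary matrix satisfies `P⁻ = {1°, 3°, 5°}`, then
every unique element set contains at most one row. -/
theorem JSet_subsingleton_of_condPminus {K N : ℕ} (D : Fin K → Fin N → Bool)
    (h : CondPminus D) :
    ∀ c : Fin N, (JSet D c).Subsingleton := by
  obtain ⟨-, h3, h5⟩ := h
  -- key lemma: if r1,r2 in JSet, and some column separates them with r1 in, contradiction
  have key : ∀ c : Fin N, ∀ r1 r2 : Fin K, r1 ∈ JSet D c → r2 ∈ JSet D c →
      ∀ c' : Fin N, D r1 c' = true → D r2 c' = false → False := by
    intro c r1 r2 h1 h2 c' hc1 hc2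
    obtain ⟨h1m, h1u⟩ := h1
    obtain ⟨h2m, h2u⟩ := h2
    rcases h5 c' c with hsub | hsup | hdisj
    · rcases eq_or_ne (colSet D c') (colSet D c) with heq | hne
      · exact absurd (heq ▸ h2m : r2 ∈ colSet D c') (by simp [colSet, hc2])
      · exact (h1u c' ⟨hsub, fun hc => hne (le_antisymm hsub hc)⟩) hc1
    · exact absurd (hsup h2m : r2 ∈ colSet D c') (by simp [colSet, hc2])
    · have : r1 ∈ colSet D c' ∩ colSet D c := ⟨hc1, h1m⟩
      rw [hdisj] at this; exact this
  intro c r1 h1 r2 h2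
  by_contra hne
  have : ¬ ∀ c', D r1 c' = D r2 c' := fun hall => hne (h3 r1 r2 hall)
  push_neg at this
  obtain ⟨c', hc'⟩ := this
  cases hb1 : D r1 c' <;> cases hb2 : D r2 c'
  · exact hc' (hb1.trans hb2.symm)
  · exact key c r2 r1 h2 h1 c' hb2 hb1
  · exact key c r1 r2 h1 h2 c' hb1 hb2
  · exact hc' (hb1.trans hb2.symm)
end

section
/- If a binary matrix D satisfies conditions {1°, 5°, 6°} or conditions {1°, 3°, 5°}, then each row of D corresponds to a unique unique element set: every row r belongs to J_{S_c} for some column c, and no two distinct rows r₁ ≠ r₂ belong to the same unique element set J_{S_c}. -/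
private lemma jset_helper {K N : ℕ} (D : Fin K → Fin N → Bool) (h5 : Cond5 D)
    {c c' : Fin N} {r₁ r₂ : Fin K} (h₁ : r₁ ∈ JSet D c) (h₂ : r₂ ∈ JSet D c)
    (ht : D r₁ c' = true) (hf : D r₂ c' = false) : False := by
  have hr1 : r₁ ∈ colSet D c' := ht
  have hr2 : r₂ ∉ colSet D c' := by simp [colSet, hf]
  rcases h5 c' c with hsub | hsub | hdisj
  · have hss : colSet D c' ⊂ colSet D c :=
      ⟨hsub, fun habs => hr2 (habs h₂.1)⟩
    exact h₁.2 c' hss hr1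
  · exact hr2 (hsub h₂.1)
  · have : r₁ ∈ colSet D c' ∩ colSet D c := ⟨hr1, h₁.1⟩
    rw [hdisj] at this
    exact this

/-- If a binary matrix satisfies `{1°, 5°, 6°}` or `{1°, 3°, 5°}`,
then every row belongs to some unique element set, and no two distinct rows belong to
the same unique element set. -/
theorem rows_correspond_to_unique_JSet {K N : ℕ} (D : Fin K → Fin N → Bool)
    (h : (Cond1 D ∧ Cond5 D ∧ Cond6 D) ∨ (Cond1 D ∧ Cond3 D ∧ Cond5 D)) :
    (∀ r : Fin K, ∃ c : Fin N, r ∈ JSet D c) ∧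
    (∀ (c : Fin N) (r₁ r₂ : Fin K), r₁ ∈ JSet D c → r₂ ∈ JSet D c → r₁ = r₂) := by
  have h1 : Cond1 D := h.elim (·.1) (·.1)
  have coeF : ∀ c : Fin N,
      ((Finset.univ.filter fun x => D x c = true : Finset (Fin K)) : Set (Fin K))
        = colSet D c := by
    intro c; ext x; simp [colSet]
  constructor
  · intro r
    obtain ⟨c0, hc0⟩ := h1 r
    obtain ⟨c, hc, hmin⟩ := Finset.exists_min_image
      (Finset.univ.filter fun c => D r c = true)
      (fun c => (Finset.univ.filter fun x => D x c = true).card)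
      ⟨c0, by simp [hc0]⟩
    refine ⟨c, (Finset.mem_filter.mp hc).2, ?_⟩
    intro c' hsub hr
    have hc' : c' ∈ Finset.univ.filter fun c => D r c = true := by
      have : D r c' = true := hr
      simp [this]
    have hle := hmin c' hc'
    have hss : (Finset.univ.filter fun x => D x c' = true : Finset (Fin K))
        ⊂ Finset.univ.filter fun x => D x c = true := by
      rw [← Finset.coe_ssubset, coeF, coeF]
      exact hsub
    have := Finset.card_lt_card hss
    omega
  · intro c r₁ r₂ h₁ h₂
    rcases h with ⟨_, _, h6⟩ | ⟨_, h3, h5⟩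
    · obtain ⟨r, _, hu⟩ := h6 c
      rw [hu r₁ h₁, hu r₂ h₂]
    · by_contra hne
      have hd : ¬ ∀ c', D r₁ c' = D r₂ c' := fun hall => hne (h3 _ _ hall)
      push_neg at hd
      obtain ⟨c', hcc⟩ := hd
      cases hb1 : D r₁ c' <;> cases hb2 : D r₂ c'
      · rw [hb1, hb2] at hcc; exact hcc rfl
      · exact jset_helper D h5 h₂ h₁ hb2 hb1
      · exact jset_helper D h5 h₁ h₂ hb1 hb2
      · rw [hb1, hb2] at hcc; exact hcc rfl
end

section
/- If a K×N binary matrix D⁻ satisfies condition set P⁻ = {1°, 3°, 5°}, then there exist K distinct columns c₁, …, c_K of D⁻ such that each unique element set J_{S_{c_k}} contains exactly one row, these singleton sets are pairwise distinct, and together they contain all K rows of D⁻. -/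
/-- The column set as a finset. -/
def Fcol {K N : ℕ} (D : Fin K → Fin N → Bool) (c : Fin N) : Finset (Fin K) :=
  Finset.univ.filter fun k => D k c = true

lemma mem_Fcol {K N : ℕ} (D : Fin K → Fin N → Bool) (c : Fin N) (r : Fin K) :
    r ∈ Fcol D c ↔ D r c = true := by simp [Fcol]

lemma colSet_subset_iff {K N : ℕ} (D : Fin K → Fin N → Bool) (a b : Fin N) :
    colSet D a ⊆ colSet D b ↔ Fcol D a ⊆ Fcol D b := by
  constructor
  · intro hsub x hx
    rw [mem_Fcol] at hx ⊢
    exact hsub hx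
  · intro hsub x hx
    have := hsub ((mem_Fcol D a x).2 hx)
    exact (mem_Fcol D b x).1 this

lemma colSet_ssubset_iff {K N : ℕ} (D : Fin K → Fin N → Bool) (a b : Fin N) :
    colSet D a ⊂ colSet D b ↔ Fcol D a ⊂ Fcol D b := by
  rw [Set.ssubset_def, Finset.ssubset_def, colSet_subset_iff, colSet_subset_iff]

/-- Any two elements of a unique element set have identical rows. -/
lemma JSet_rows_eq {K N : ℕ} {D : Fin K → Fin N → Bool} (h5 : Cond5 D) {x : Fin N}
    {a b : Fin K} (ha : a ∈ JSet D x) (hb : b ∈ JSet D x) (c'' : Fin N) :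
    D a c'' = true → D b c'' = true := by
  intro hac
  rcases h5 c'' x with hsub | hsup | hdisj
  · rcases eq_or_ne (colSet D c'') (colSet D x) with heq | hne
    · have hbm : b ∈ colSet D c'' := by rw [heq]; exact hb.1
      exact hbm
    · exact absurd hac (ha.2 c'' ⟨hsub, fun hx => hne (Set.Subset.antisymm hsub hx)⟩)
  · exact hsup hb.1
  · have := Set.eq_empty_iff_forall_notMem.mp hdisj a
    exact absurd ⟨hac, ha.1⟩ this

/-- If a `K × N` binary matrix satisfies `P⁻ = {1°, 3°, 5°}`, then
there are `K` distinct columns whose unique element sets are singletons, pairwise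
distinct, and together contain all `K` rows. -/
theorem exists_K_columns_with_singleton_JSets {K N : ℕ} (D : Fin K → Fin N → Bool)
    (h : CondPminus D) :
    ∃ c : Fin K → Fin N, Function.Injective c ∧
      (∀ k : Fin K, ∃ r : Fin K, JSet D (c k) = {r}) ∧
      (∀ k₁ k₂ : Fin K, k₁ ≠ k₂ → JSet D (c k₁) ≠ JSet D (c k₂)) ∧
      (∀ r : Fin K, ∃ k : Fin K, r ∈ JSet D (c k)) := by
  obtain ⟨h1, h3, h5⟩ := h
  have hmin : ∀ r : Fin K, ∃ c : Fin N, D r c = true ∧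
      ∀ c', D r c' = true → (Fcol D c).card ≤ (Fcol D c').card := by
    intro r
    obtain ⟨c0, hc0⟩ := h1 r
    obtain ⟨c, hc, hcmin⟩ := Finset.exists_min_image
      (Finset.univ.filter fun c => D r c = true) (fun c => (Fcol D c).card)
      ⟨c0, by simp [hc0]⟩
    exact ⟨c, by simpa using hc, fun c' hc' => hcmin c' (by simp [hc'])⟩
  choose c hc hcmin using hmin
  have hrJ : ∀ r, r ∈ JSet D (c r) := by
    intro r
    refine ⟨hc r, ?_⟩
    intro c' hsub hr'
    have hcard : (Fcol D c').card < (Fcol D (c r)).card :=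
      Finset.card_lt_card ((colSet_ssubset_iff D c' (c r)).1 hsub)
    exact absurd (hcmin r c' hr') (by omega)
  have hJ : ∀ r, JSet D (c r) = {r} := by
    intro r
    ext a
    simp only [Set.mem_singleton_iff]
    constructor
    · intro ha
      apply h3 a r
      intro c''
      rcases hab : D a c'' with _ | _
      · rcases hrb : D r c'' with _ | _
        · rfl
        · exact absurd (JSet_rows_eq h5 (hrJ r) ha c'' hrb) (by simp [hab])
      · rw [JSet_rows_eq h5 ha (hrJ r) c'' hab]
    · rintro rfl; exact hrJ a
  refine ⟨c, ?_, fun k => ⟨k, hJ k⟩, ?_, fun r => ⟨r, hrJ r⟩⟩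
  · intro a b hab
    have : ({a} : Set (Fin K)) = {b} := by rw [← hJ a, ← hJ b, hab]
    simpa using this
  · intro k₁ k₂ hne heq
    rw [hJ k₁, hJ k₂] at heq
    exact hne (by simpa using heq)
end

section
/- For a binary matrix D ∈ {0,1}^{n×n}: D satisfies condition set P₀ = {1°, 2°, 5°, 6°} if and only if D satisfies condition set P = {1°, 2°, 3°, 4°, 5°}. -/
section AuxLemmas

variable {n : ℕ} {D : Fin n → Fin n → Bool}

lemma mem_colSet_iff {r c : Fin n} : r ∈ colSet D c ↔ D r c = true := Iff.rfl

/-- Every row lies in the `J`-set of some minimal column containing it. -/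
lemma exists_mem_JSet (h1 : Cond1 D) (r : Fin n) : ∃ c, r ∈ JSet D c := by
  classical
  obtain ⟨c0, hc0⟩ := h1 r
  have hne : (Finset.univ.filter (fun c => D r c = true)).Nonempty :=
    ⟨c0, by simp [hc0]⟩
  obtain ⟨c, hc, hmin⟩ := Finset.exists_min_image _
    (fun c => (Finset.univ.filter (fun ρ => D ρ c = true)).card) hne
  have hrc : D r c = true := by simpa using hc
  refine ⟨c, hrc, ?_⟩
  intro c' hss hrc'
  have hrc'' : D r c' = true := hrc'
  have hc' : c' ∈ Finset.univ.filter (fun c => D r c = true) := by simp [hrc'']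
  have hcard := hmin c' hc'
  have hsub : (Finset.univ.filter fun ρ => D ρ c' = true) ⊂
      (Finset.univ.filter fun ρ => D ρ c = true) := by
    constructor
    · intro x hx
      simp only [Finset.mem_filter, Finset.mem_univ, true_and] at hx ⊢
      exact hss.subset hx
    · intro hcon
      obtain ⟨x, hxc, hxc'⟩ := Set.exists_of_ssubset hss
      have : x ∈ Finset.univ.filter fun ρ => D ρ c' = true :=
        hcon (by simpa using (mem_colSet_iff.mp hxc))
      exact hxc' (mem_colSet_iff.mpr (by simpa using this))
  exact absurd (Finset.card_lt_card hsub) (not_lt.mpr hcard)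

lemma memJ_iff (h5 : Cond5 D) {r c : Fin n} (hr : r ∈ JSet D c) (c' : Fin n) :
    r ∈ colSet D c' ↔ colSet D c ⊆ colSet D c' := by
  constructor
  · intro hrc'
    rcases h5 c' c with h | h | h
    · rcases lt_or_eq_of_le h with hlt | heq
      · exact absurd hrc' (hr.2 c' hlt)
      · exact heq.ge
    · exact h
    · exact absurd (Set.mem_inter hrc' hr.1) (by simp [h])
  · intro h
    exact h hr.1

lemma J_unique (h3 : Cond3 D) (h5 : Cond5 D) {c r₁ r₂ : Fin n}
    (hr₁ : r₁ ∈ JSet D c) (hr₂ : r₂ ∈ JSet D c) : r₁ = r₂ := by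
  apply h3
  intro c'
  have e := (memJ_iff h5 hr₁ c').trans (memJ_iff h5 hr₂ c').symm
  have e' : D r₁ c' = true ↔ D r₂ c' = true := e
  cases hb1 : D r₁ c' <;> cases hb2 : D r₂ c' <;> simp_all

lemma JSet_congr {c₁ c₂ : Fin n} (h : colSet D c₁ = colSet D c₂) :
    JSet D c₁ = JSet D c₂ := by
  simp only [JSet, h]

end AuxLemmas

/-- A binary `n × n` matrix satisfies `P₀ = {1°, 2°, 5°, 6°}` iff it
satisfies `P = {1°, 2°, 3°, 4°, 5°}`. -/
theorem condP0_iff_condP {n : ℕ} (D : Fin n → Fin n → Bool) :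
    (Cond1 D ∧ Cond2 D ∧ Cond5 D ∧ Cond6 D) ↔ CondP D := by
  classical
  constructor
  · rintro ⟨h1, h2, h5, h6⟩
    have h6' : ∀ c, ∃ r, r ∈ JSet D c ∧ ∀ y, y ∈ JSet D c → y = r := h6
    choose g hg hguniq using h6'
    have h3 : Cond3 D := by
      intro r₁ r₂ hrows
      obtain ⟨c, hc⟩ := exists_mem_JSet h1 r₁
      have hc₂ : r₂ ∈ JSet D c := by
        refine ⟨?_, ?_⟩
        · have := hc.1
          simp only [mem_colSet_iff] at this ⊢
          rw [← hrows c]; exact this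
        · intro c' hss hmem
          apply hc.2 c' hss
          simp only [mem_colSet_iff] at hmem ⊢
          rw [hrows c']; exact hmem
      rw [hguniq c r₁ hc, hguniq c r₂ hc₂]
    have h4 : Cond4 D := by
      have gsurj : Function.Surjective g := by
        intro r
        obtain ⟨c, hc⟩ := exists_mem_JSet h1 r
        exact ⟨c, (hguniq c r hc).symm⟩
      have ginj : Function.Injective g := (Finite.injective_iff_surjective (α := Fin n)).mpr gsurj
      intro c₁ c₂ hcols
      have hcs : colSet D c₁ = colSet D c₂ := by
        ext r; simp [mem_colSet_iff, hcols r]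
      have hJ : JSet D c₁ = JSet D c₂ := JSet_congr hcs
      apply ginj
      exact hguniq c₂ (g c₁) (hJ ▸ hg c₁)
    exact ⟨h1, h2, h3, h4, h5⟩
  · rintro ⟨h1, h2, h3, h4, h5⟩
    refine ⟨h1, h2, h5, ?_⟩
    choose h hh using exists_mem_JSet h1
    have hinj : Function.Injective h := by
      intro r₁ r₂ heq
      exact J_unique h3 h5 (hh r₁) (heq ▸ hh r₂)
    have hsurj : Function.Surjective h := Finite.injective_iff_surjective.mp hinj
    intro c
    obtain ⟨r, hr⟩ := hsurj c
    exact ⟨r, hr ▸ hh r, fun y hy => J_unique h3 h5 hy (hr ▸ hh r)⟩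
end

section
/- Let K < N and let D⁻ be a K×N binary matrix satisfying condition set P⁻ = {1°, 3°, 5°}. Then there exists an N×N binary matrix D satisfying condition set P = {1°, 2°, 3°, 4°, 5°} and an injection ι from the K row indices of D⁻ into the N row indices of D such that for every row r of D⁻ and every column c, D(ι(r), c) = D⁻(r, c). -/
/-! ### Auxiliary lemmas for Statement 17 -/

section Aux

variable {K N : ℕ}

/-- Every row has a "home" column: a column containing it whose column set is minimal
(hence contained in every column set containing the row). -/
lemma exists_home (D : Fin K → Fin N → Bool) (h1 : Cond1 D) (h5 : Cond5 D) (r : Fin K) :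
    ∃ c, D r c = true ∧ ∀ c', D r c' = true → colSet D c ⊆ colSet D c' := by
  obtain ⟨c₀, hc₀⟩ := h1 r
  obtain ⟨c, hc, hmin⟩ := Finset.exists_min_image (Finset.univ.filter fun c => D r c = true)
    (fun c => (colSet D c).ncard) ⟨c₀, by simp [hc₀]⟩
  simp only [Finset.mem_filter, Finset.mem_univ, true_and] at hc
  refine ⟨c, hc, fun c' hc' => ?_⟩
  rcases h5 c c' with h | h | h
  · exact h
  · have hle := hmin c' (by simp [hc'])
    have : colSet D c' = colSet D c := Set.eq_of_subset_of_ncard_le h hle (Set.toFinite _)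
    rw [this]
  · exfalso
    have hmem : r ∈ colSet D c ∩ colSet D c' := ⟨hc, hc'⟩
    rw [h] at hmem
    exact hmem

/-- Characterization of the support of a row through its home column. -/
lemma support_char (D : Fin K → Fin N → Bool) {r : Fin K} {ch : Fin N}
    (hh : D r ch = true)
    (hmin : ∀ c', D r c' = true → colSet D ch ⊆ colSet D c') (c : Fin N) :
    D r c = true ↔ colSet D ch ⊆ colSet D c := by
  constructor
  · exact hmin c
  · intro hsub
    exact hsub hh

/-- A square matrix satisfying `P⁻` satisfies `P`. -/
lemma condP_of_square {N : ℕ} (D : Fin N → Fin N → Bool) (h : CondPminus D) : CondP D := by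
  obtain ⟨h1, h3, h5⟩ := h
  choose home hhome hmin using exists_home D h1 h5
  have hchar : ∀ r c, D r c = true ↔ colSet D (home r) ⊆ colSet D c :=
    fun r c => support_char D (hhome r) (hmin r) c
  have hinj : Function.Injective home := by
    intro r r' he
    apply h3
    intro c
    rw [Bool.eq_iff_iff, hchar r c, hchar r' c, he]
  have hsurj : Function.Surjective home := by
    have := Finite.injective_iff_surjective.mp hinj
    exact this
  refine ⟨h1, ?_, h3, ?_, h5⟩
  · intro c
    obtain ⟨r, hr⟩ := hsurj c
    exact ⟨r, hr ▸ hhome r⟩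
  · intro c₁ c₂ hcc
    obtain ⟨r₁, hr₁⟩ := hsurj c₁
    obtain ⟨r₂, hr₂⟩ := hsurj c₂
    have hset : colSet D c₁ = colSet D c₂ := by
      ext x
      simp only [colSet, Set.mem_setOf_eq, hcc x]
    have : r₁ = r₂ := by
      apply h3
      intro c
      rw [Bool.eq_iff_iff, hchar r₁ c, hchar r₂ c, hr₁, hr₂, hset]
    rw [← hr₁, ← hr₂, this]

/-- Append a row at the bottom of a matrix. -/
def snocRow {K N : ℕ} (D : Fin K → Fin N → Bool) (f : Fin N → Bool) :
    Fin (K + 1) → Fin N → Bool :=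
  Fin.snoc D f

lemma castSucc_ne_last' {K : ℕ} (r : Fin K) : Fin.castSucc r ≠ Fin.last K :=
  (Fin.castSucc_lt_last r).ne

@[simp] lemma snocRow_castSucc {K N : ℕ} (D : Fin K → Fin N → Bool) (f : Fin N → Bool)
    (r : Fin K) : snocRow D f (Fin.castSucc r) = D r := by
  simp [snocRow]

@[simp] lemma snocRow_last {K N : ℕ} (D : Fin K → Fin N → Bool) (f : Fin N → Bool) :
    snocRow D f (Fin.last K) = f := by
  simp [snocRow]

/-- Membership in a column set of a `snoc`-extended matrix. -/
lemma snoc_colSet_mem (D : Fin K → Fin N → Bool) (f : Fin N → Bool) (x : Fin (K + 1))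
    (c : Fin N) :
    (snocRow D f x c = true) ↔
      (∃ r, x = Fin.castSucc r ∧ D r c = true) ∨ (x = Fin.last K ∧ f c = true) := by
  induction x using Fin.lastCases with
  | last =>
      rw [snocRow_last]
      constructor
      · intro hf; exact Or.inr ⟨rfl, hf⟩
      · rintro (⟨r, hr, _⟩ | ⟨_, hf⟩)
        · exact absurd hr.symm (castSucc_ne_last' r)
        · exact hf
  | cast r =>
      rw [snocRow_castSucc]
      constructor
      · intro hD; exact Or.inl ⟨r, rfl, hD⟩
      · rintro (⟨r', hr', hD⟩ | ⟨hl, _⟩)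
        · rwa [Fin.castSucc_inj.mp hr']
        · exact absurd hl (castSucc_ne_last' r)

/-- Generic one-row extension step preserving `P⁻`. -/
lemma step_generic (D : Fin K → Fin N → Bool) (h : CondPminus D) (f : Fin N → Bool)
    (hne : ∃ c, f c = true)
    (hdist : ∀ r, ∃ c, D r c ≠ f c)
    (hflag2 : ∀ c c', f c = true → f c' = true →
      colSet D c ⊆ colSet D c' ∨ colSet D c' ⊆ colSet D c)
    (hflag1 : ∀ c c', f c = true → f c' = false →
      colSet D c' ⊆ colSet D c ∨ colSet D c ∩ colSet D c' = ∅) :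
    CondPminus (snocRow D f) ∧ ∀ r c, snocRow D f (Fin.castSucc r) c = D r c := by
  obtain ⟨h1, h3, h5⟩ := h
  have hext : ∀ (r : Fin K) (c : Fin N), snocRow D f (Fin.castSucc r) c = D r c :=
    fun r c => by rw [snocRow_castSucc]
  -- subset lifting
  have hsub : ∀ c₁ c₂, colSet D c₁ ⊆ colSet D c₂ → (f c₁ = true → f c₂ = true) →
      colSet (snocRow D f) c₁ ⊆ colSet (snocRow D f) c₂ := by
    intro c₁ c₂ hs hf x hx
    rw [colSet, Set.mem_setOf_eq, snoc_colSet_mem] at hx ⊢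
    rcases hx with ⟨r, hr, hD⟩ | ⟨hl, hf₁⟩
    · exact Or.inl ⟨r, hr, hs hD⟩
    · exact Or.inr ⟨hl, hf hf₁⟩
  have hdisj : ∀ c₁ c₂, colSet D c₁ ∩ colSet D c₂ = ∅ → (f c₁ = false ∨ f c₂ = false) →
      colSet (snocRow D f) c₁ ∩ colSet (snocRow D f) c₂ = ∅ := by
    intro c₁ c₂ hd hf
    ext x
    simp only [Set.mem_inter_iff, Set.mem_empty_iff_false, iff_false, not_and]
    intro hx₁ hx₂
    rw [colSet, Set.mem_setOf_eq, snoc_colSet_mem] at hx₁ hx₂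
    rcases hx₁ with ⟨r, hr, hD₁⟩ | ⟨hl₁, hf₁⟩
    · rcases hx₂ with ⟨r', hr', hD₂⟩ | ⟨hl₂, _⟩
      · have hrr : r = r' := Fin.castSucc_injective K (hr.symm.trans hr')
        have hmem : r ∈ colSet D c₁ ∩ colSet D c₂ := ⟨hD₁, hrr ▸ hD₂⟩
        rw [hd] at hmem
        exact hmem
      · exact castSucc_ne_last' r (hr.symm.trans hl₂)
    · rcases hx₂ with ⟨r', hr', _⟩ | ⟨_, hf₂⟩
      · exact castSucc_ne_last' r' (hr'.symm.trans hl₁)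
      · rcases hf with hf | hf
        · rw [hf₁] at hf; simp at hf
        · rw [hf₂] at hf; simp at hf
  refine ⟨⟨?_, ?_, ?_⟩, hext⟩
  · -- Cond1
    intro x
    induction x using Fin.lastCases with
    | last =>
        obtain ⟨c, hc⟩ := hne
        exact ⟨c, by rw [snocRow_last]; exact hc⟩
    | cast r =>
        obtain ⟨c, hc⟩ := h1 r
        exact ⟨c, by rw [hext]; exact hc⟩
  · -- Cond3
    intro x₁ x₂ hcc
    induction x₁ using Fin.lastCases with
    | last =>
        induction x₂ using Fin.lastCases with
        | last => rfl
        | cast r₂ =>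
            obtain ⟨c, hc⟩ := hdist r₂
            exact absurd ((hcc c).symm.trans (by rw [snocRow_last])) (by rw [hext]; exact hc)
    | cast r₁ =>
        induction x₂ using Fin.lastCases with
        | last =>
            obtain ⟨c, hc⟩ := hdist r₁
            exact absurd ((hcc c).trans (by rw [snocRow_last])) (by rw [hext]; exact hc)
        | cast r₂ =>
            have : r₁ = r₂ := h3 r₁ r₂ (fun c => by rw [← hext r₁ c, ← hext r₂ c]; exact hcc c)
            rw [this]
  · -- Cond5
    intro c₁ c₂
    rcases hf₁ : f c₁ with _ | _ <;> rcases hf₂ : f c₂ with _ | _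
    · -- both false: lift h5 directly
      rcases h5 c₁ c₂ with hs | hs | hs
      · exact Or.inl (hsub c₁ c₂ hs (by rw [hf₁]; intro h; exact absurd h (by simp)))
      · exact Or.inr (Or.inl (hsub c₂ c₁ hs (by rw [hf₂]; intro h; exact absurd h (by simp))))
      · exact Or.inr (Or.inr (hdisj c₁ c₂ hs (Or.inl hf₁)))
    · -- f c₁ = false, f c₂ = true
      rcases hflag1 c₂ c₁ hf₂ hf₁ with hs | hs
      · exact Or.inl (hsub c₁ c₂ hs (fun h => hf₂))
      · exact Or.inr (Or.inr (hdisj c₁ c₂ (by rw [Set.inter_comm]; exact hs) (Or.inl hf₁)))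
    · -- f c₁ = true, f c₂ = false
      rcases hflag1 c₁ c₂ hf₁ hf₂ with hs | hs
      · exact Or.inr (Or.inl (hsub c₂ c₁ hs (fun h => hf₁)))
      · exact Or.inr (Or.inr (hdisj c₁ c₂ hs (Or.inr hf₂)))
    · -- both true
      rcases hflag2 c₁ c₂ hf₁ hf₂ with hs | hs
      · exact Or.inl (hsub c₁ c₂ hs (fun _ => hf₂))
      · exact Or.inr (Or.inl (hsub c₂ c₁ hs (fun _ => hf₁)))

end Aux

section Step

variable {K N : ℕ}

/-- One-row extension preserving `P⁻`, possible whenever `K < N`. -/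
lemma step_exists (hKN : K < N) (D : Fin K → Fin N → Bool) (hD : CondPminus D) :
    ∃ D' : Fin (K + 1) → Fin N → Bool, CondPminus D' ∧
      ∀ r c, D' (Fin.castSucc r) c = D r c := by
  classical
  obtain ⟨h1, h3, h5⟩ := hD
  by_cases hz : ∃ z, colSet D z = ∅
  · -- Case A: there is a zero column
    obtain ⟨z, hzz⟩ := hz
    have hg := step_generic D ⟨h1, h3, h5⟩ (fun c => decide (c = z))
      ⟨z, by simp⟩
      (fun r => ⟨z, by
        have hDz : D r z = false := by
          by_contra hc
          have : r ∈ colSet D z := by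
            rw [Bool.not_eq_false] at hc; exact hc
          rw [hzz] at this; exact this
        rw [hDz]; simp⟩)
      (fun c c' hc hc' => by
        have e1 : c = z := of_decide_eq_true hc
        have e2 : c' = z := of_decide_eq_true hc'
        rw [e1, e2]; exact Or.inl subset_rfl)
      (fun c c' hc _ => by
        have e1 : c = z := of_decide_eq_true hc
        rw [e1, hzz]; exact Or.inr (Set.empty_inter _))
    exact ⟨_, hg.1, hg.2⟩
  · have hnz : ∀ c, (colSet D c).Nonempty := fun c =>
      Set.nonempty_iff_ne_empty.mpr (fun he => hz ⟨c, he⟩)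
    by_cases hdup : ∃ c₁ c₂ : Fin N, c₁ ≠ c₂ ∧ colSet D c₁ = colSet D c₂
    · -- Case B: duplicate columns
      obtain ⟨c₁, c₂, hne12, hceq⟩ := hdup
      set f : Fin N → Bool := fun c => decide (colSet D c₁ ⊂ colSet D c ∨ c = c₁) with hfdef
      have hfc₁ : f c₁ = true := decide_eq_true (Or.inr rfl)
      have hfc₂ : f c₂ = false := by
        apply decide_eq_false
        rintro (hs | he)
        · rw [hceq] at hs; exact hs.ne rfl
        · exact hne12 he.symm
      have hsubf : ∀ c, f c = true → colSet D c₁ ⊆ colSet D c := by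
        intro c hc
        rcases of_decide_eq_true hc with hs | he
        · exact hs.subset
        · rw [he]
      have hg := step_generic D ⟨h1, h3, h5⟩ f
        ⟨c₁, hfc₁⟩
        (fun r => by
          by_cases hrc : D r c₁ = true
          · refine ⟨c₂, ?_⟩
            have : D r c₂ = true := by
              have : r ∈ colSet D c₂ := hceq ▸ hrc
              exact this
            rw [this, hfc₂]; simp
          · refine ⟨c₁, ?_⟩
            rw [Bool.not_eq_true] at hrc
            rw [hrc, hfc₁]; simp)
        (fun c c' hc hc' => by
          rcases h5 c c' with hs | hs | hs
          · exact Or.inl hs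
          · exact Or.inr hs
          · exfalso
            obtain ⟨x, hx⟩ := hnz c₁
            have : x ∈ colSet D c ∩ colSet D c' := ⟨hsubf c hc hx, hsubf c' hc' hx⟩
            rw [hs] at this; exact this)
        (fun c c' hc hc' => by
          rcases h5 c c' with hs | hs | hs
          · left
            have hsub1 : colSet D c₁ ⊆ colSet D c' := (hsubf c hc).trans hs
            have heq : colSet D c₁ = colSet D c' := by
              by_contra hne
              have : ¬(colSet D c₁ ⊂ colSet D c' ∨ c' = c₁) := of_decide_eq_false hc'
              exact this (Or.inl (Set.ssubset_iff_subset_ne.mpr ⟨hsub1, hne⟩))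
            rw [← heq]; exact hsubf c hc
          · exact Or.inl hs
          · exact Or.inr hs)
      exact ⟨_, hg.1, hg.2⟩
    · -- Case C: all columns distinct and nonzero
      push_neg at hdup
      have hcolinj : ∀ a b : Fin N, colSet D a = colSet D b → a = b := by
        intro a b hab
        by_contra hne
        exact hdup a b hne hab
      choose home hhome hmin using exists_home D h1 h5
      have hnsurj : ¬Function.Surjective home := by
        intro hs
        have := Fintype.card_le_of_surjective home hs
        simp only [Fintype.card_fin] at this
        omega
      rw [Function.Surjective] at hnsurj
      push_neg at hnsurj
      obtain ⟨c₀, hc₀⟩ := hnsurj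
      set f : Fin N → Bool := fun c => decide (colSet D c₀ ⊆ colSet D c) with hfdef
      have hsubf : ∀ c, f c = true → colSet D c₀ ⊆ colSet D c := fun c hc =>
        of_decide_eq_true hc
      have hg := step_generic D ⟨h1, h3, h5⟩ f
        ⟨c₀, decide_eq_true subset_rfl⟩
        (fun r => by
          by_contra hcon
          push_neg at hcon
          have h₁ : D r c₀ = true := by
            rw [hcon c₀]; exact decide_eq_true subset_rfl
          have h₂ : colSet D (home r) ⊆ colSet D c₀ := hmin r c₀ h₁
          have h₃ : f (home r) = true := by rw [← hcon (home r)]; exact hhome r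
          have h₄ : colSet D c₀ ⊆ colSet D (home r) := hsubf _ h₃
          exact hc₀ r (hcolinj _ _ (Set.Subset.antisymm h₂ h₄)))
        (fun c c' hc hc' => by
          rcases h5 c c' with hs | hs | hs
          · exact Or.inl hs
          · exact Or.inr hs
          · exfalso
            obtain ⟨x, hx⟩ := hnz c₀
            have : x ∈ colSet D c ∩ colSet D c' := ⟨hsubf c hc hx, hsubf c' hc' hx⟩
            rw [hs] at this; exact this)
        (fun c c' hc hc' => by
          rcases h5 c c' with hs | hs | hs
          · exfalso
            have : f c' = true := decide_eq_true ((hsubf c hc).trans hs)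
            rw [this] at hc'; exact Bool.noConfusion hc'
          · exact Or.inl hs
          · exact Or.inr hs)
      exact ⟨_, hg.1, hg.2⟩

/-- Growing a `P⁻` matrix to a square one, by induction on `N - K`. -/
lemma grow {N : ℕ} : ∀ d K, N - K = d → K ≤ N → ∀ D : Fin K → Fin N → Bool, CondPminus D →
    ∃ (E : Fin N → Fin N → Bool) (ι : Fin K → Fin N),
      CondPminus E ∧ Function.Injective ι ∧ ∀ r c, E (ι r) c = D r c := by
  intro d
  induction d with
  | zero =>
      intro K hd hK D hD
      have hKN : K = N := by omega
      subst hKN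
      exact ⟨D, id, hD, Function.injective_id, fun r c => rfl⟩
  | succ d ih =>
      intro K hd hK D hD
      have hKN : K < N := by omega
      obtain ⟨D', hD', hext⟩ := step_exists hKN D hD
      obtain ⟨E, ι, hE, hι, hEι⟩ := ih (K + 1) (by omega) (by omega) D' hD'
      refine ⟨E, ι ∘ Fin.castSucc, hE, hι.comp (Fin.castSucc_injective K), fun r c => ?_⟩
      rw [Function.comp_apply, hEι, hext]

end Step


/-- A `K × N` binary matrix satisfying `P⁻` (with `K < N`) can be
completed to an `N × N` binary matrix satisfying `P`. -/
theorem condPminus_matrix_completion {K N : ℕ} (hKN : K < N)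
    (Dminus : Fin K → Fin N → Bool) (h : CondPminus Dminus) :
    ∃ (D : Fin N → Fin N → Bool) (ι : Fin K → Fin N),
      CondP D ∧ Function.Injective ι ∧
      ∀ (r : Fin K) (c : Fin N), D (ι r) c = Dminus r c := by
  obtain ⟨E, ι, hE, hι, hEι⟩ := grow (N - K) K rfl hKN.le Dminus h
  exact ⟨E, ι, condP_of_square E hE, hι, hEι⟩
end
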